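/- arXiv:1103.3683 — 11 statements merged into one kernel-verified Lean document; each statement's English description precedes it below -/
import Mathlib

section
/- Fix h > 0 and define u_*(h,ε) := ε² · (e^{(1+ε)h} − 1 − εh) / (1 + εh − e^{−(1+ε)h}) for ε > 0. Then u_*(h,ε) is strictly increasing in ε on (0,∞). -/
set_option maxHeartbeats 1600000 in
theorem stmt_3 (h : ℝ) (hh : 0 < h) (u : ℝ → ℝ)
    (hu : ∀ ε : ℝ, u ε =
      ε ^ 2 * (Real.exp ((1 + ε) * h) - 1 - ε * h) /
        (1 + ε * h - Real.exp (-(1 + ε) * h))) :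
    StrictMonoOn u (Set.Ioi 0) := by
  intro x hx y hy hxy
  simp only [Set.mem_Ioi] at hx hy
  rw [hu x, hu y]
  simp only [neg_mul]
  set a := (1 + x) * h with ha_def
  set b := (1 + y) * h with hb_def
  have ha : 0 < a := by rw [ha_def]; nlinarith
  have hb : 0 < b := by rw [hb_def]; nlinarith
  have hba : b - a = (y - x) * h := by rw [ha_def, hb_def]; ring
  have hab : a < b := by nlinarith
  have hEa : a + 1 < Real.exp a := Real.add_one_lt_exp (ne_of_gt ha)
  have hEb : b + 1 < Real.exp b := Real.add_one_lt_exp (ne_of_gt hb)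
  have hEexp : Real.exp b = Real.exp a * Real.exp (b - a) := by
    rw [← Real.exp_add]; ring_nf
  have hEc : b - a + 1 ≤ Real.exp (b - a) := Real.add_one_le_exp _
  have hEdiff : Real.exp a * (b - a) ≤ Real.exp b - Real.exp a := by
    nlinarith [Real.exp_pos a]
  have hFa : Real.exp (-a) * Real.exp a = 1 := by rw [← Real.exp_add]; simp
  have hFb : Real.exp (-b) * Real.exp b = 1 := by rw [← Real.exp_add]; simp
  have hFc : -(b - a) + 1 < Real.exp (-(b - a)) :=
    Real.add_one_lt_exp (by simp only [ne_eq, neg_eq_zero]; intro hc; linarith)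
  have hFapos := Real.exp_pos (-a)
  have hFbpos := Real.exp_pos (-b)
  have hFa1 : Real.exp (-a) < 1 := by nlinarith
  have hFb1 : Real.exp (-b) < 1 := by nlinarith
  -- numerators and denominators
  have hA1 : 0 < Real.exp a - 1 - x * h := by nlinarith
  have hA2 : 0 < Real.exp b - 1 - y * h := by nlinarith
  have hB1 : 0 < 1 + x * h - Real.exp (-a) := by nlinarith
  have hB2 : 0 < 1 + y * h - Real.exp (-b) := by nlinarith
  -- key 1 : x * A1 < y * A2
  have hAmono : Real.exp a - 1 - x * h < Real.exp b - 1 - y * h := by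
    nlinarith
  have key1 : x * (Real.exp a - 1 - x * h) < y * (Real.exp b - 1 - y * h) :=
    mul_lt_mul'' hxy hAmono (le_of_lt hx) (le_of_lt hA1)
  -- key 2 : x * B2 < y * B1
  have hexpc : Real.exp (-b) = Real.exp (-a) * Real.exp (-(b - a)) := by
    rw [← Real.exp_add]; ring_nf
  -- e^{-a} x h < 1 - e^{-a}  (from e^a > 1 + x h)
  have h1 : Real.exp (-a) * (x * h) < 1 - Real.exp (-a) := by
    have hxa : x * h < a := by rw [ha_def]; nlinarith
    have h0 : x * h + 1 < Real.exp a := by linarith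
    nlinarith [mul_lt_mul_of_pos_left h0 hFapos]
  -- e^{-a} - e^{-b} < e^{-a}(b-a) = e^{-a}(y-x)h
  have h2 : Real.exp (-a) - Real.exp (-b) < Real.exp (-a) * ((y - x) * h) := by
    rw [← hba]
    nlinarith [mul_lt_mul_of_pos_left hFc hFapos]
  have h3 : x * (Real.exp (-a) - Real.exp (-b)) <
      x * (Real.exp (-a) * ((y - x) * h)) := mul_lt_mul_of_pos_left h2 hx
  have h4 : (y - x) * (Real.exp (-a) + Real.exp (-a) * (x * h)) < (y - x) * 1 :=
    mul_lt_mul_of_pos_left (by linarith) (by linarith)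
  have key2 : x * (1 + y * h - Real.exp (-b)) < y * (1 + x * h - Real.exp (-a)) := by
    nlinarith [h3, h4]
  -- conclude
  rw [div_lt_div_iff₀ hB1 hB2]
  calc x ^ 2 * (Real.exp a - 1 - x * h) * (1 + y * h - Real.exp (-b))
      = (x * (Real.exp a - 1 - x * h)) * (x * (1 + y * h - Real.exp (-b))) := by ring
    _ < (y * (Real.exp b - 1 - y * h)) * (y * (1 + x * h - Real.exp (-a))) :=
        mul_lt_mul'' key1 key2 (le_of_lt (mul_pos hx hA1)) (le_of_lt (mul_pos hx hB2))
    _ = y ^ 2 * (Real.exp b - 1 - y * h) * (1 + x * h - Real.exp (-a)) := by ring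
end

section
/- Fix h > 0. For ε > 0 let u_*(h,ε) := ε²(e^{(1+ε)h} − 1 − εh)/(1 + εh − e^{−(1+ε)h}) and δ(ε) := (u_*(h,ε) − ε)·(e^{(1+ε)h}(1 + εh) − 1)/(ε² e^{2(1+ε)h}). Then δ is strictly increasing on (0,∞), δ(ε) → −∞ as ε → 0⁺, and δ(ε) → 1 as ε → ∞. -/
open Filter Real

noncomputable def Fa (h ε : ℝ) : ℝ :=
  1 - Real.exp (-((1 + ε) * h)) * (1 + h + ε * h + 1 / ε)
    + Real.exp (-((1 + ε) * h)) ^ 2 / ε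

noncomputable def Fd (h ε : ℝ) : ℝ :=
  Real.exp (-((1 + ε) * h)) *
    (h ^ 2 * (1 + ε) + h * (1 - 2 * Real.exp (-((1 + ε) * h))) / ε
      + (1 - Real.exp (-((1 + ε) * h))) / ε ^ 2)

theorem key_eq (h ε : ℝ) (hh : 0 < h) (hε : 0 < ε) :
    (ε ^ 2 * (Real.exp ((1 + ε) * h) - 1 - ε * h) /
        (1 + ε * h - Real.exp (-(1 + ε) * h)) - ε) *
      (Real.exp ((1 + ε) * h) * (1 + ε * h) - 1) /
        (ε ^ 2 * Real.exp (2 * (1 + ε) * h)) = Fa h ε := by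
  unfold Fa
  have ht : 0 < (1 + ε) * h := by positivity
  have hE1 : 1 < Real.exp ((1 + ε) * h) := Real.one_lt_exp_iff.mpr ht
  have hE : 0 < Real.exp ((1 + ε) * h) := Real.exp_pos _
  have hneg : Real.exp (-(1 + ε) * h) = (Real.exp ((1 + ε) * h))⁻¹ := by
    rw [← Real.exp_neg]; ring_nf
  have hneg2 : Real.exp (-((1 + ε) * h)) = (Real.exp ((1 + ε) * h))⁻¹ :=
    Real.exp_neg _
  have h2 : Real.exp (2 * (1 + ε) * h) = Real.exp ((1 + ε) * h) ^ 2 := by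
    rw [← Real.exp_nat_mul]; ring_nf
  rw [hneg, hneg2, h2]
  set E := Real.exp ((1 + ε) * h) with hEdef
  have hne : -1 + ε * E * h + E ≠ 0 := by nlinarith [mul_pos (mul_pos hε hE) hh]
  have hDeq : 1 + ε * h - E⁻¹ = (-1 + ε * E * h + E) / E := by
    field_simp; ring
  rw [hDeq]
  rw [div_div_eq_mul_div]
  field_simp
  ring

theorem Fa_deriv (h ε : ℝ) (hε : ε ≠ 0) : HasDerivAt (Fa h) (Fd h ε) ε := by
  have hinner : HasDerivAt (fun x : ℝ => -((1 + x) * h)) (-h) ε := by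
    have := (((hasDerivAt_id ε).const_add 1).mul_const h).fun_neg
    simpa using this
  have hA : HasDerivAt (fun x : ℝ => Real.exp (-((1 + x) * h)))
      (Real.exp (-((1 + ε) * h)) * (-h)) ε := (Real.hasDerivAt_exp _).comp ε hinner
  have hinv : HasDerivAt (fun x : ℝ => 1 / x) (-(ε ^ 2)⁻¹) ε := by
    simpa [one_div] using hasDerivAt_inv hε
  have hP : HasDerivAt (fun x : ℝ => 1 + h + x * h + 1 / x) (h + -(ε ^ 2)⁻¹) ε := by
    have h1 : HasDerivAt (fun x : ℝ => 1 + h + x * h) h ε := by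
      simpa using ((hasDerivAt_id ε).mul_const h).const_add (1 + h)
    exact h1.add hinv
  have hsq : HasDerivAt (fun x : ℝ => Real.exp (-((1 + x) * h)) ^ 2)
      (2 * Real.exp (-((1 + ε) * h)) * (Real.exp (-((1 + ε) * h)) * (-h))) ε := by
    simpa [pow_two] using hA.fun_pow 2
  have hmain := ((hA.fun_mul hP).const_sub 1).fun_add (hsq.fun_div (hasDerivAt_id' ε) hε)
  have heq : Fa h = fun x : ℝ =>
      1 - Real.exp (-((1 + x) * h)) * (1 + h + x * h + 1 / x)
        + Real.exp (-((1 + x) * h)) ^ 2 / x := rfl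
  rw [heq]
  refine hmain.congr_deriv ?_
  simp only [Fd, id_eq]
  field_simp
  ring

theorem Fd_pos (h ε : ℝ) (hh : 0 < h) (hε : 0 < ε) : 0 < Fd h ε := by
  unfold Fd
  set A := Real.exp (-((1 + ε) * h)) with hAdef
  have hA : 0 < A := Real.exp_pos _
  have hexp : 1 + (h + h * ε) < Real.exp (h + h * ε) := by
    have := Real.add_one_lt_exp (x := h + h * ε) (by positivity)
    linarith
  have hAeq : A = (Real.exp (h + h * ε))⁻¹ := by
    rw [hAdef, ← Real.exp_neg]; ring_nf
  have hkey : A * (1 + h * ε) < 1 := by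
    rw [hAeq]
    have hEpos : (0:ℝ) < Real.exp (h + h * ε) := Real.exp_pos _
    rw [inv_mul_lt_iff₀ hEpos]
    nlinarith
  apply mul_pos hA
  have hmain : 0 < h ^ 2 * (1 + ε) * ε ^ 2 + h * (1 - 2 * A) * ε + (1 - A) := by
    nlinarith [mul_pos hh hε, sq_nonneg (h * ε), mul_pos (mul_pos hh hε) (mul_pos hh hε),
      mul_pos hA (mul_pos hh hε)]
  have h2 : h ^ 2 * (1 + ε) + h * (1 - 2 * A) / ε + (1 - A) / ε ^ 2
      = (h ^ 2 * (1 + ε) * ε ^ 2 + h * (1 - 2 * A) * ε + (1 - A)) / ε ^ 2 := by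
    field_simp
  rw [h2]
  positivity

theorem Fa_mono (h : ℝ) (hh : 0 < h) : StrictMonoOn (Fa h) (Set.Ioi 0) := by
  apply strictMonoOn_of_deriv_pos (convex_Ioi 0)
  · intro x hx
    exact (Fa_deriv h x (ne_of_gt hx)).differentiableAt.continuousAt.continuousWithinAt
  · intro x hx
    rw [interior_Ioi] at hx
    rw [(Fa_deriv h x (ne_of_gt hx)).deriv]
    exact Fd_pos h x hh hx

theorem Fa_atBot (h : ℝ) (hh : 0 < h) :
    Tendsto (Fa h) (nhdsWithin 0 (Set.Ioi 0)) atBot := by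
  have heq : ∀ ε ∈ Set.Ioi (0:ℝ), Fa h ε =
      (1 - Real.exp (-((1 + ε) * h)) * (1 + h + ε * h)) +
      (Real.exp (-((1 + ε) * h)) ^ 2 - Real.exp (-((1 + ε) * h))) * ε⁻¹ := by
    intro ε hε
    have : ε ≠ 0 := ne_of_gt hε
    unfold Fa
    field_simp
    ring
  have hA : Tendsto (fun ε : ℝ => Real.exp (-((1 + ε) * h)))
      (nhdsWithin 0 (Set.Ioi 0)) (nhds (Real.exp (-h))) := by
    apply Filter.Tendsto.mono_left _ nhdsWithin_le_nhds
    have : Continuous (fun ε : ℝ => Real.exp (-((1 + ε) * h))) := by continuity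
    simpa using this.tendsto 0
  have h1 : Tendsto (fun ε : ℝ => 1 - Real.exp (-((1 + ε) * h)) * (1 + h + ε * h))
      (nhdsWithin 0 (Set.Ioi 0)) (nhds (1 - Real.exp (-h) * (1 + h))) := by
    apply Filter.Tendsto.mono_left _ nhdsWithin_le_nhds
    have : Continuous (fun ε : ℝ => 1 - Real.exp (-((1 + ε) * h)) * (1 + h + ε * h)) := by
      continuity
    simpa using this.tendsto 0
  have hC : Real.exp (-h) ^ 2 - Real.exp (-h) < 0 := by
    have h1 : Real.exp (-h) < 1 := Real.exp_lt_one_iff.mpr (by linarith)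
    nlinarith [Real.exp_pos (-h)]
  have h2 : Tendsto (fun ε : ℝ => Real.exp (-((1 + ε) * h)) ^ 2 - Real.exp (-((1 + ε) * h)))
      (nhdsWithin 0 (Set.Ioi 0)) (nhds (Real.exp (-h) ^ 2 - Real.exp (-h))) :=
    (hA.pow 2).sub hA
  have h3 : Tendsto (fun ε : ℝ =>
      (Real.exp (-((1 + ε) * h)) ^ 2 - Real.exp (-((1 + ε) * h))) * ε⁻¹)
      (nhdsWithin 0 (Set.Ioi 0)) atBot :=
    Filter.Tendsto.neg_mul_atTop hC h2 tendsto_inv_nhdsGT_zero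
  have hf : ∀ᶠ ε in nhdsWithin (0:ℝ) (Set.Ioi 0),
      (fun ε : ℝ => 1 - Real.exp (-((1 + ε) * h)) * (1 + h + ε * h)) ε ≤
        2 - Real.exp (-h) * (1 + h) := by
    filter_upwards [h1.eventually (eventually_le_nhds
      (show (1:ℝ) - Real.exp (-h) * (1 + h) < 2 - Real.exp (-h) * (1 + h) by linarith))] with ε hε
    exact hε
  have hsum := tendsto_atBot_add_left_of_ge' _ (2 - Real.exp (-h) * (1 + h)) hf h3
  refine hsum.congr' ?_
  filter_upwards [self_mem_nhdsWithin] with ε hε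
  exact (heq ε hε).symm

theorem Fa_atTop (h : ℝ) (hh : 0 < h) :
    Tendsto (Fa h) atTop (nhds 1) := by
  have hy : Tendsto (fun ε : ℝ => (1 + ε) * h) atTop atTop :=
    (tendsto_atTop_add_const_left _ 1 tendsto_id).atTop_mul_const hh
  have hA : Tendsto (fun ε : ℝ => Real.exp (-((1 + ε) * h))) atTop (nhds 0) :=
    Real.tendsto_exp_atBot.comp (tendsto_neg_atBot_iff.mpr hy)
  have hterm1 : Tendsto (fun ε : ℝ => Real.exp (-((1 + ε) * h)) * (1 + h + ε * h))
      atTop (nhds 0) := by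
    have base : Tendsto (fun y : ℝ => Real.exp (-y) * (1 + y)) atTop (nhds 0) := by
      have b1 : Tendsto (fun y : ℝ => Real.exp (-y)) atTop (nhds 0) :=
        Real.tendsto_exp_neg_atTop_nhds_zero
      have b2 : Tendsto (fun y : ℝ => y ^ 1 * Real.exp (-y)) atTop (nhds 0) :=
        Real.tendsto_pow_mul_exp_neg_atTop_nhds_zero 1
      have := b1.add b2
      simp only [pow_one] at this
      convert this using 2 with y
      · ring
      · norm_num
    have := base.comp hy
    refine this.congr fun ε => ?_
    simp only [Function.comp]
    ring_nf
  have hinv : Tendsto (fun ε : ℝ => ε⁻¹) atTop (nhds 0) := tendsto_inv_atTop_zero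
  have hterm2 : Tendsto (fun ε : ℝ => Real.exp (-((1 + ε) * h)) * ε⁻¹) atTop (nhds 0) := by
    simpa using hA.mul hinv
  have hterm3 : Tendsto (fun ε : ℝ => Real.exp (-((1 + ε) * h)) ^ 2 * ε⁻¹) atTop (nhds 0) := by
    simpa using (hA.pow 2).mul hinv
  have := ((tendsto_const_nhds (x := (1:ℝ)) (f := atTop)).sub hterm1).sub hterm2 |>.add hterm3
  simp only [sub_zero, add_zero] at this
  refine this.congr fun ε => ?_
  unfold Fa
  ring

theorem stmt_4 (h : ℝ) (hh : 0 < h) (u δ : ℝ → ℝ)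
    (hu : ∀ ε : ℝ, u ε =
      ε ^ 2 * (Real.exp ((1 + ε) * h) - 1 - ε * h) /
        (1 + ε * h - Real.exp (-(1 + ε) * h)))
    (hδ : ∀ ε : ℝ, δ ε =
      (u ε - ε) * (Real.exp ((1 + ε) * h) * (1 + ε * h) - 1) /
        (ε ^ 2 * Real.exp (2 * (1 + ε) * h))) :
    StrictMonoOn δ (Set.Ioi 0) ∧
    Filter.Tendsto δ (nhdsWithin 0 (Set.Ioi 0)) Filter.atBot ∧
    Filter.Tendsto δ Filter.atTop (nhds 1) := by
  have hEq : ∀ ε ∈ Set.Ioi (0:ℝ), δ ε = Fa h ε := by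
    intro ε hε
    rw [hδ ε, hu ε]
    exact key_eq h ε hh hε
  refine ⟨?_, ?_, ?_⟩
  · intro a ha b hb hab
    rw [hEq a ha, hEq b hb]
    exact Fa_mono h hh ha hb hab
  · refine (Fa_atBot h hh).congr' ?_
    filter_upwards [self_mem_nhdsWithin] with ε hε
    exact (hEq ε hε).symm
  · refine (Fa_atTop h hh).congr' ?_
    filter_upwards [eventually_gt_atTop 0] with ε hε
    exact (hEq ε hε).symm
end

section
/- Fix h > 0 and set u_*(h,ε) := ε²(e^{(1+ε)h} − 1 − εh)/(1 + εh − e^{−(1+ε)h}) for ε > 0. There is a unique s > 0 such that u_*(h, s²) = s². -/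
noncomputable def Gf (h : ℝ) : ℝ → ℝ := fun x =>
  x * Real.exp ((1 + x) * h) + Real.exp (-(1 + x) * h) - h * x ^ 2 - (1 + h) * x - 1

lemma hasDerivAt_Gf (h x : ℝ) :
    HasDerivAt (Gf h) ((1 + x * h) * Real.exp ((1 + x) * h)
      - h * Real.exp (-(1 + x) * h) - 2 * h * x - (1 + h)) x := by
  have e1 : HasDerivAt (fun y : ℝ => (1 + y) * h) h x := by
    simpa using ((hasDerivAt_id x).const_add 1).mul_const h
  have e1n : HasDerivAt (fun y : ℝ => -(1 + y) * h) (-h) x := by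
    simpa using (((hasDerivAt_id x).const_add 1).neg).mul_const h
  have e2 : HasDerivAt (fun y : ℝ => Real.exp ((1 + y) * h)) (Real.exp ((1 + x) * h) * h) x :=
    (Real.hasDerivAt_exp _).comp x e1
  have e3 : HasDerivAt (fun y : ℝ => Real.exp (-(1 + y) * h))
      (Real.exp (-(1 + x) * h) * (-h)) x :=
    (Real.hasDerivAt_exp _).comp x e1n
  have e4 : HasDerivAt (fun y : ℝ => y * Real.exp ((1 + y) * h))
      (1 * Real.exp ((1 + x) * h) + x * (Real.exp ((1 + x) * h) * h)) x :=
    (hasDerivAt_id x).mul e2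
  have e5 : HasDerivAt (fun y : ℝ => h * y ^ 2) (h * (2 * x)) x := by
    simpa using (hasDerivAt_pow 2 x).const_mul h
  have e6 : HasDerivAt (fun y : ℝ => (1 + h) * y) (1 + h) x := by
    simpa using (hasDerivAt_id x).const_mul (1 + h)
  have := (((e4.add e3).sub e5).sub e6).sub_const 1
  convert this using 1 <;> try rfl
  ring

lemma hasDerivAt_Gf' (h x : ℝ) :
    HasDerivAt (fun y : ℝ => (1 + y * h) * Real.exp ((1 + y) * h)
      - h * Real.exp (-(1 + y) * h) - 2 * h * y - (1 + h))
      (h * (2 + x * h) * Real.exp ((1 + x) * h)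
        + h ^ 2 * Real.exp (-(1 + x) * h) - 2 * h) x := by
  have e1 : HasDerivAt (fun y : ℝ => (1 + y) * h) h x := by
    simpa using ((hasDerivAt_id x).const_add 1).mul_const h
  have e1n : HasDerivAt (fun y : ℝ => -(1 + y) * h) (-h) x := by
    simpa using (((hasDerivAt_id x).const_add 1).neg).mul_const h
  have e2 : HasDerivAt (fun y : ℝ => Real.exp ((1 + y) * h)) (Real.exp ((1 + x) * h) * h) x :=
    (Real.hasDerivAt_exp _).comp x e1
  have e3 : HasDerivAt (fun y : ℝ => Real.exp (-(1 + y) * h))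
      (Real.exp (-(1 + x) * h) * (-h)) x :=
    (Real.hasDerivAt_exp _).comp x e1n
  have e4 : HasDerivAt (fun y : ℝ => 1 + y * h) h x := by
    simpa using ((hasDerivAt_id x).mul_const h).const_add 1
  have e5 : HasDerivAt (fun y : ℝ => (1 + y * h) * Real.exp ((1 + y) * h))
      (h * Real.exp ((1 + x) * h) + (1 + x * h) * (Real.exp ((1 + x) * h) * h)) x :=
    e4.mul e2
  have e6 : HasDerivAt (fun y : ℝ => h * Real.exp (-(1 + y) * h))
      (h * (Real.exp (-(1 + x) * h) * (-h))) x := e3.const_mul h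
  have e7 : HasDerivAt (fun y : ℝ => 2 * h * y) (2 * h) x := by
    simpa using (hasDerivAt_id x).const_mul (2 * h)
  have := ((e5.sub e6).sub e7).sub_const (1 + h)
  convert this using 1 <;> try rfl
  ring

theorem stmt_5 (h : ℝ) (hh : 0 < h) (u : ℝ → ℝ)
    (hu : ∀ ε : ℝ, u ε =
      ε ^ 2 * (Real.exp ((1 + ε) * h) - 1 - ε * h) /
        (1 + ε * h - Real.exp (-(1 + ε) * h))) :
    ∃! s : ℝ, 0 < s ∧ u (s ^ 2) = s ^ 2 := by
  -- key equivalence: for ε > 0, u ε = ε ↔ Gf h ε = 0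
  have key : ∀ ε : ℝ, 0 < ε → (u ε = ε ↔ Gf h ε = 0) := by
    intro ε hε
    have hB : 0 < 1 + ε * h - Real.exp (-(1 + ε) * h) := by
      have h1 : Real.exp (-(1 + ε) * h) < 1 := by
        rw [Real.exp_lt_one_iff]
        nlinarith
      nlinarith [mul_pos hε hh]
    rw [hu ε, div_eq_iff hB.ne']
    constructor
    · intro H
      have h2 : ε * Gf h ε = 0 := by
        simp only [Gf]
        linear_combination H
      exact (mul_eq_zero.1 h2).resolve_left hε.ne'
    · intro H
      simp only [Gf] at H
      linear_combination ε * H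
  -- strict convexity of Gf h on [0, ∞)
  have hconv : StrictConvexOn ℝ (Set.Ici 0) (Gf h) := by
    apply strictConvexOn_of_deriv2_pos (convex_Ici 0)
    · exact fun x _ => ((hasDerivAt_Gf h x).continuousAt).continuousWithinAt
    · intro x hx
      rw [interior_Ici] at hx
      have hx' : 0 < x := hx
      have d1 : deriv (Gf h) = fun y => (1 + y * h) * Real.exp ((1 + y) * h)
          - h * Real.exp (-(1 + y) * h) - 2 * h * y - (1 + h) :=
        funext fun y => (hasDerivAt_Gf h y).deriv
      have d2 : deriv^[2] (Gf h) x = h * (2 + x * h) * Real.exp ((1 + x) * h)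
          + h ^ 2 * Real.exp (-(1 + x) * h) - 2 * h := by
        simp only [Function.iterate_succ, Function.iterate_zero, Function.comp_apply, id_eq, d1]
        exact (hasDerivAt_Gf' h x).deriv
      rw [d2]
      have e1 : 1 < Real.exp ((1 + x) * h) := by
        rw [Real.one_lt_exp_iff]
        nlinarith
      have e2 : 0 < Real.exp (-(1 + x) * h) := Real.exp_pos _
      nlinarith [mul_pos hh (sub_pos.2 e1),
        mul_pos (mul_pos (mul_pos hx' hh) hh) (Real.exp_pos ((1 + x) * h)),
        mul_pos (mul_pos hh hh) e2]
  have hG0 : Gf h 0 < 0 := by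
    simp only [Gf]
    have : Real.exp (-(1 + 0) * h) < 1 := by
      rw [Real.exp_lt_one_iff]; nlinarith
    nlinarith [this]
  -- a point where Gf h is positive
  obtain ⟨T, hT⟩ : ∃ T : ℝ, T = 1 + 2 * Real.sqrt (h + 1) / h := ⟨_, rfl⟩
  have hsq : 0 ≤ Real.sqrt (h + 1) := Real.sqrt_nonneg _
  have hsqpos : 0 < Real.sqrt (h + 1) := Real.sqrt_pos.2 (by linarith)
  have hT1 : 1 < T := by
    rw [hT]
    have : 0 < 2 * Real.sqrt (h + 1) / h := by positivity
    linarith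
  have hT0 : (0 : ℝ) < T := by linarith
  have h1 : 2 * Real.sqrt (h + 1) ≤ T * h := by
    rw [hT, add_mul, div_mul_cancel₀ _ hh.ne']
    linarith
  have hTh : h + 1 ≤ (T * h) ^ 2 / 4 := by
    have h2 : Real.sqrt (h + 1) ^ 2 = h + 1 := Real.sq_sqrt (by linarith)
    have h3 := mul_self_le_mul_self (by positivity : (0:ℝ) ≤ 2 * Real.sqrt (h + 1)) h1
    nlinarith [h2, h3]
  have hGT : 0 < Gf h T := by
    have hTh0 : 0 < T * h := mul_pos hT0 hh
    have e1 : (1 + T * h / 2) ^ 2 ≤ Real.exp ((1 + T) * h) := by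
      have a1 : Real.exp (T * h) ≤ Real.exp ((1 + T) * h) := by
        apply Real.exp_le_exp.2; nlinarith
      have a2 : T * h / 2 + 1 ≤ Real.exp (T * h / 2) := Real.add_one_le_exp _
      have h3 : Real.exp (T * h / 2) * Real.exp (T * h / 2) = Real.exp (T * h) := by
        rw [← Real.exp_add]; ring_nf
      have a2' := mul_self_le_mul_self (by nlinarith : (0:ℝ) ≤ T * h / 2 + 1) a2
      nlinarith [a2', h3, a1]
    have e2 : 0 < Real.exp (-(1 + T) * h) := Real.exp_pos _
    simp only [Gf]
    have key2 : T * (1 + T * h / 2) ^ 2 ≤ T * Real.exp ((1 + T) * h) :=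
      mul_le_mul_of_nonneg_left e1 hT0.le
    have e3 : T * (h + 1) ≤ T ^ 3 * h ^ 2 / 4 := by
      nlinarith [mul_le_mul_of_nonneg_left hTh hT0.le]
    nlinarith [e2, key2, e3, hT1]
  -- IVT
  have hcont : ContinuousOn (Gf h) (Set.Icc 0 T) :=
    fun x _ => ((hasDerivAt_Gf h x).continuousAt).continuousWithinAt
  have h0mem : (0:ℝ) ∈ Set.Icc (Gf h 0) (Gf h T) := ⟨hG0.le, hGT.le⟩
  obtain ⟨c, hcmem, hc⟩ := intermediate_value_Icc hT0.le hcont h0mem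
  have hc0 : 0 < c := by
    rcases eq_or_lt_of_le hcmem.1 with h' | h'
    · exact absurd (h' ▸ hc) hG0.ne
    · exact h'
  -- uniqueness of positive roots via strict convexity
  have helper : ∀ a b : ℝ, 0 < a → a < b → Gf h a = 0 → Gf h b = 0 → False := by
    intro a b ha hab hga hgb
    have hb : 0 < b := lt_trans ha hab
    obtain ⟨μ, hμ⟩ : ∃ μ : ℝ, μ = a / b := ⟨_, rfl⟩
    have hμ0 : 0 < μ := hμ ▸ div_pos ha hb
    have hμ1 : μ < 1 := hμ ▸ (div_lt_one hb).2 hab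
    have hcomb := hconv.2 (Set.mem_Ici.2 le_rfl) (Set.mem_Ici.2 hb.le) hb.ne
      (sub_pos.2 hμ1) hμ0 (by ring)
    have heq : (1 - μ) • (0:ℝ) + μ • b = a := by
      simp only [smul_eq_mul, mul_zero, zero_add, hμ]
      exact div_mul_cancel₀ a hb.ne'
    rw [heq, hga, hgb] at hcomb
    simp only [smul_eq_mul, mul_zero, add_zero] at hcomb
    nlinarith [hcomb, mul_neg_of_pos_of_neg (sub_pos.2 hμ1) hG0]
  have uniq : ∀ a : ℝ, 0 < a → Gf h a = 0 → a = c := by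
    intro a ha hga
    rcases lt_trichotomy a c with h' | h' | h'
    · exact (helper a c ha h' hga hc).elim
    · exact h'
    · exact (helper c a hc0 h' hc hga).elim
  refine ⟨Real.sqrt c, ⟨Real.sqrt_pos.2 hc0, ?_⟩, ?_⟩
  · have hs2 : Real.sqrt c ^ 2 = c := Real.sq_sqrt hc0.le
    rw [hs2]
    exact (key c hc0).2 hc
  · rintro s' ⟨hs', hus'⟩
    have hs'2 : 0 < s' ^ 2 := by positivity
    have hg : Gf h (s' ^ 2) = 0 := (key _ hs'2).1 hus'
    have h2 := uniq _ hs'2 hg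
    calc s' = Real.sqrt (s' ^ 2) := (Real.sqrt_sq hs'.le).symm
    _ = Real.sqrt c := by rw [h2]
end

section
/- Fix h > 0, σ > 0, and w ∈ {−1, 0}. Define r(ε) := e^{(ε+w)h}(1 + εh)(ε² + σ²) − ε² e^{2(ε+w)h} − σ² for ε > |w|. Then r has a unique zero in (|w|, ∞), and r changes sign from positive to negative at that zero (r(ε) > 0 for ε below the zero and r(ε) < 0 above it, within (|w|,∞)). -/
set_option maxHeartbeats 1000000

open Real Set

namespace Stmt7Aux

noncomputable def Ef (h w ε : ℝ) : ℝ := Real.exp ((ε + w) * h)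
noncomputable def Af (h w ε : ℝ) : ℝ := ε ^ 2 * (Ef h w ε - 1 - ε * h)
noncomputable def Bf (h w ε : ℝ) : ℝ := 1 + ε * h - Real.exp (-((ε + w) * h))
noncomputable def qf (h w ε : ℝ) : ℝ := Af h w ε / Bf h w ε

lemma Ef_pos (h w ε : ℝ) : 0 < Ef h w ε := Real.exp_pos _

lemma contAf (h w : ℝ) : Continuous (fun ε => Af h w ε) := by
  unfold Af Ef; fun_prop

lemma contBf (h w : ℝ) : Continuous (fun ε => Bf h w ε) := by
  unfold Bf; fun_prop

lemma basic (w : ℝ) (hw : w = -1 ∨ w = 0) {ε : ℝ} (hε : |w| < ε) :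
    0 < ε ∧ 0 < ε + w := by
  rcases hw with rfl | rfl
  · rw [show |(-1 : ℝ)| = 1 by norm_num] at hε
    constructor <;> linarith
  · rw [show |(0 : ℝ)| = 0 by norm_num] at hε
    constructor <;> linarith

lemma Bf_pos (h w : ℝ) (hh : 0 < h) (hw : w = -1 ∨ w = 0) {ε : ℝ}
    (hε : |w| < ε) : 0 < Bf h w ε := by
  obtain ⟨hε0, hεw⟩ := basic w hw hε
  have h1 : Real.exp (-((ε + w) * h)) < 1 := by
    rw [Real.exp_lt_one_iff]
    nlinarith
  have h2 : 0 < ε * h := mul_pos hε0 hh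
  unfold Bf; linarith

lemma hasDerivAt_Ef (h w ε : ℝ) : HasDerivAt (fun ε => Ef h w ε) (h * Ef h w ε) ε := by
  have h1 : HasDerivAt (fun ε : ℝ => (ε + w) * h) h ε := by
    simpa using ((hasDerivAt_id ε).add_const w).mul_const h
  simpa [Ef, mul_comm] using h1.exp

lemma hasDerivAt_Af (h w ε : ℝ) :
    HasDerivAt (fun ε => Af h w ε)
      (2 * ε * (Ef h w ε - 1 - ε * h) + ε ^ 2 * (h * Ef h w ε - h)) ε := by
  have h2 : HasDerivAt (fun ε : ℝ => Ef h w ε - 1 - ε * h) (h * Ef h w ε - h) ε := by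
    simpa using ((hasDerivAt_Ef h w ε).sub_const 1).fun_sub ((hasDerivAt_id ε).mul_const h)
  have h3 : HasDerivAt (fun ε : ℝ => ε ^ 2) (2 * ε) ε := by
    simpa using hasDerivAt_pow 2 ε
  simpa [Af] using h3.fun_mul h2

lemma hasDerivAt_Bf (h w ε : ℝ) :
    HasDerivAt (fun ε => Bf h w ε) (h + h * Real.exp (-((ε + w) * h))) ε := by
  have h1 : HasDerivAt (fun ε : ℝ => -((ε + w) * h)) (-h) ε := by
    simpa using (((hasDerivAt_id ε).add_const w).mul_const h).fun_neg
  have h2 := h1.exp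
  have h3 : HasDerivAt (fun ε : ℝ => 1 + ε * h) h ε := by
    simpa using ((hasDerivAt_id ε).mul_const h).const_add 1
  have h4 := h3.fun_sub h2
  have h5 : HasDerivAt (fun x : ℝ => 1 + x * h - Real.exp (-((x + w) * h)))
      (h + h * Real.exp (-((ε + w) * h))) ε := by
    convert h4 using 1 <;> first | rfl | ring
  exact h5

lemma key_pos (h w : ℝ) (hh : 0 < h) {ε : ℝ} (hε0 : 0 < ε)
    (hE : 1 + ε * h < Ef h w ε) :
    0 < (2 * ε * (Ef h w ε - 1 - ε * h) + ε ^ 2 * (h * Ef h w ε - h)) * Bf h w ε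
        - Af h w ε * (h + h * Real.exp (-((ε + w) * h))) := by
  have hEp : 0 < Ef h w ε := Ef_pos h w ε
  have hFE : Real.exp (-((ε + w) * h)) = (Ef h w ε)⁻¹ := by
    rw [Ef, ← Real.exp_neg]
  have hx : 0 < ε * h := mul_pos hε0 hh
  set E := Ef h w ε with hEdef
  have hEne : E ≠ 0 := ne_of_gt hEp
  have hid : (2 * ε * (E - 1 - ε * h) + ε ^ 2 * (h * E - h)) * Bf h w ε
      - Af h w ε * (h + h * E⁻¹)
      = ε * (E - 1) * (((ε * h) ^ 2 + 2 * (ε * h) + 2) * E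
          - ((ε * h) ^ 2 + 4 * (ε * h) + 2)) / E := by
    unfold Bf Af
    rw [hFE, ← hEdef]
    field_simp
    ring
  rw [hFE, hid]
  have h1 : 0 < E - 1 := by nlinarith
  have h2 : 0 < ((ε * h) ^ 2 + 2 * (ε * h) + 2) * E - ((ε * h) ^ 2 + 4 * (ε * h) + 2) := by
    nlinarith [sq_nonneg (ε * h), mul_pos hx hx, mul_pos (mul_pos hx hx) hx]
  have h3 : 0 < ε * (E - 1) * (((ε * h) ^ 2 + 2 * (ε * h) + 2) * E
      - ((ε * h) ^ 2 + 4 * (ε * h) + 2)) := by positivity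
  positivity

lemma Af_pos_of_gt (h w ε : ℝ) (hε0 : 0 < ε) (hE : 1 + ε * h < Ef h w ε) :
    0 < Af h w ε := by
  have := pow_pos hε0 2
  unfold Af; nlinarith

lemma gt_of_Af_pos (h w ε : ℝ) (hε0 : 0 < ε) (hA : 0 < Af h w ε) :
    1 + ε * h < Ef h w ε := by
  have h2 : (0:ℝ) < ε ^ 2 := pow_pos hε0 2
  have hA' : 0 < ε ^ 2 * (Ef h w ε - 1 - ε * h) := hA
  nlinarith

lemma Af_forward (h w : ℝ) (hh : 0 < h) (hw : w = -1 ∨ w = 0)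
    {ε₁ ε₂ : ℝ} (h1 : |w| < ε₁) (hA1 : 0 < Af h w ε₁) :
    ∀ ε ∈ Icc ε₁ ε₂, 0 < Af h w ε := by
  by_contra hcon
  push_neg at hcon
  obtain ⟨ε', hmem, hle⟩ := hcon
  set S : Set ℝ := {ε ∈ Icc ε₁ ε₂ | Af h w ε ≤ 0} with hSdef
  have hSne : S.Nonempty := ⟨ε', hmem, hle⟩
  have hScl : IsClosed S := by
    have : S = Icc ε₁ ε₂ ∩ (fun ε => Af h w ε) ⁻¹' (Iic 0) := rfl
    rw [this]
    exact isClosed_Icc.inter (IsClosed.preimage (contAf h w) isClosed_Iic)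
  have hSbd : BddBelow S := ⟨ε₁, fun x hx => hx.1.1⟩
  have hmS : sInf S ∈ S := hScl.csInf_mem hSne hSbd
  set m := sInf S with hmdef
  have hm1 : ε₁ < m := by
    rcases lt_or_eq_of_le hmS.1.1 with hlt | heq
    · exact hlt
    · exfalso; rw [← heq] at hmS; linarith [hmS.2]
  have hpos : ∀ ε ∈ Ico ε₁ m, 0 < Af h w ε := by
    intro ε hε
    by_contra hc; push_neg at hc
    have hεS : ε ∈ S := ⟨⟨hε.1, le_trans (le_of_lt hε.2) hmS.1.2⟩, hc⟩
    exact absurd (csInf_le hSbd hεS) (not_le.mpr hε.2)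
  have hmono : StrictMonoOn (fun ε => Af h w ε) (Icc ε₁ m) := by
    apply strictMonoOn_of_deriv_pos (convex_Icc ε₁ m) (contAf h w).continuousOn
    intro x hx
    rw [interior_Icc] at hx
    have hx1 : |w| < x := lt_trans h1 hx.1
    have hx0 : 0 < x := (basic w hw hx1).1
    have hxA : 0 < Af h w x := hpos x ⟨le_of_lt hx.1, hx.2⟩
    have hxE : 1 + x * h < Ef h w x := gt_of_Af_pos h w x hx0 hxA
    rw [(hasDerivAt_Af h w x).deriv]
    have hxh : 0 < x * h := mul_pos hx0 hh
    have hx2 : (0:ℝ) < x ^ 2 := pow_pos hx0 2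
    have e1 : 0 < Ef h w x - 1 - x * h := by linarith
    have e2 : 0 < Ef h w x - 1 := by linarith
    nlinarith [mul_pos hx0 e1, mul_pos hx2 (mul_pos hh e2)]
  have hfin := hmono (left_mem_Icc.mpr (le_of_lt hm1)) (right_mem_Icc.mpr (le_of_lt hm1)) hm1
  simp only at hfin
  linarith [hmS.2]

lemma cross (h σ w : ℝ) (hh : 0 < h) (hσ : 0 < σ) (hw : w = -1 ∨ w = 0)
    {ε₁ ε₂ : ℝ} (h1 : |w| < ε₁) (h12 : ε₁ < ε₂)
    (hr1 : σ ^ 2 * Bf h w ε₁ ≤ Af h w ε₁) :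
    σ ^ 2 * Bf h w ε₂ < Af h w ε₂ := by
  have hB1 : 0 < Bf h w ε₁ := Bf_pos h w hh hw h1
  have hA1 : 0 < Af h w ε₁ := lt_of_lt_of_le (by positivity) hr1
  have hApos := Af_forward h w hh hw (ε₂ := ε₂) h1 hA1
  have hsub : ∀ x ∈ Icc ε₁ ε₂, |w| < x := fun x hx => lt_of_lt_of_le h1 hx.1
  have hq : StrictMonoOn (fun ε => Af h w ε / Bf h w ε) (Icc ε₁ ε₂) := by
    apply strictMonoOn_of_deriv_pos (convex_Icc ε₁ ε₂)
    · apply ContinuousOn.div (contAf h w).continuousOn (contBf h w).continuousOn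
      intro x hx
      exact ne_of_gt (Bf_pos h w hh hw (hsub x hx))
    · intro x hx
      rw [interior_Icc] at hx
      have hxmem : x ∈ Icc ε₁ ε₂ := ⟨le_of_lt hx.1, le_of_lt hx.2⟩
      have hBx : 0 < Bf h w x := Bf_pos h w hh hw (hsub x hxmem)
      have hAx : 0 < Af h w x := hApos x hxmem
      have hx0 : 0 < x := (basic w hw (hsub x hxmem)).1
      have hxE : 1 + x * h < Ef h w x := gt_of_Af_pos h w x hx0 hAx
      have hd := (hasDerivAt_Af h w x).fun_div (hasDerivAt_Bf h w x) (ne_of_gt hBx)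
      rw [hd.deriv]
      exact div_pos (key_pos h w hh hx0 hxE) (by positivity)
  have h2mem : ε₂ ∈ Icc ε₁ ε₂ := right_mem_Icc.mpr (le_of_lt h12)
  have h1mem : ε₁ ∈ Icc ε₁ ε₂ := left_mem_Icc.mpr (le_of_lt h12)
  have hB2 : 0 < Bf h w ε₂ := Bf_pos h w hh hw (hsub _ h2mem)
  have hlt := hq h1mem h2mem h12
  simp only at hlt
  have hq1 : σ ^ 2 ≤ Af h w ε₁ / Bf h w ε₁ := (le_div_iff₀ hB1).mpr hr1
  have hq2 : σ ^ 2 < Af h w ε₂ / Bf h w ε₂ := lt_of_le_of_lt hq1 hlt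
  exact (lt_div_iff₀ hB2).mp hq2

lemma witness_pos (h σ w : ℝ) (hh : 0 < h) (hσ : 0 < σ) (hw : w = -1 ∨ w = 0) :
    ∃ εa : ℝ, |w| < εa ∧ εa < σ + 2 ∧ Af h w εa < σ ^ 2 * Bf h w εa := by
  rcases hw with rfl | rfl
  · -- w = -1
    refine ⟨1 + 1 / (2 * (1 + h)), ?_, ?_, ?_⟩
    · rw [show |(-1 : ℝ)| = 1 by norm_num]
      have : 0 < 1 / (2 * (1 + h)) := by positivity
      linarith
    · have : 1 / (2 * (1 + h)) ≤ 1 / 2 := by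
        apply div_le_div_of_nonneg_left (by norm_num) (by norm_num) (by linarith)
      nlinarith
    · set δ : ℝ := 1 / (2 * (1 + h)) with hδdef
      have hδ0 : 0 < δ := by positivity
      have hδh : δ * h ≤ 1 / 2 := by
        rw [hδdef]
        rw [div_mul_eq_mul_div, div_le_div_iff₀ (by positivity) (by norm_num)]
        nlinarith
      have hεa : (1 + δ + -1) * h = δ * h := by ring
      have hE : Ef h (-1) (1 + δ) = Real.exp (δ * h) := by rw [Ef, hεa]
      have hF : Real.exp (-((1 + δ + -1) * h)) = Real.exp (-(δ * h)) := by rw [hεa]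
      have hexp1 : (1 - δ * h) * Real.exp (δ * h) ≤ 1 := by
        have h1 : -(δ * h) + 1 ≤ Real.exp (-(δ * h)) := Real.add_one_le_exp _
        have h2 := mul_le_mul_of_nonneg_right h1 (le_of_lt (Real.exp_pos (δ * h)))
        calc (1 - δ * h) * Real.exp (δ * h) = (-(δ * h) + 1) * Real.exp (δ * h) := by ring
          _ ≤ Real.exp (-(δ * h)) * Real.exp (δ * h) := h2
          _ = 1 := by rw [← Real.exp_add]; simp
      have hEub : Real.exp (δ * h) ≤ 1 + 2 * (δ * h) := by
        nlinarith [Real.exp_pos (δ * h), mul_pos hδ0 hh]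
      have hFle : Real.exp (-(δ * h)) ≤ 1 :=
        Real.exp_le_one_iff.mpr (by nlinarith [mul_pos hδ0 hh])
      have hδ1 : δ ≤ 1 / 2 := by
        rw [hδdef, div_le_div_iff₀ (by positivity) (by norm_num)]
        nlinarith
      unfold Af Bf
      rw [hE, hF]
      have ht : Real.exp (δ * h) - 1 - (1 + δ) * h ≤ 0 := by
        nlinarith [mul_pos hh (show (0:ℝ) < 1 - δ by linarith)]
      have hAneg : (1 + δ) ^ 2 * (Real.exp (δ * h) - 1 - (1 + δ) * h) ≤ 0 := by
        nlinarith [mul_nonneg (sq_nonneg (1 + δ)) (neg_nonneg.mpr ht)]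
      have hBpos : 0 < 1 + (1 + δ) * h - Real.exp (-(δ * h)) := by
        nlinarith [mul_pos (by linarith : (0:ℝ) < 1 + δ) hh]
      nlinarith [mul_pos (pow_pos hσ 2) hBpos]
  · -- w = 0
    obtain ⟨εa, hεadef⟩ : ∃ e : ℝ, e = min σ (1 / (2 * h)) / 2 := ⟨_, rfl⟩
    have hεa0 : 0 < εa := by
      have h1 : 0 < min σ (1 / (2 * h)) := lt_min hσ (by positivity)
      rw [hεadef]; linarith
    have hεσ : εa ≤ σ / 2 := by
      rw [hεadef]; have := min_le_left σ (1 / (2 * h)); linarith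
    obtain ⟨x, hxdef⟩ : ∃ e : ℝ, e = εa * h := ⟨_, rfl⟩
    have hx0 : 0 < x := by rw [hxdef]; exact mul_pos hεa0 hh
    have hx4 : x ≤ 1 / 4 := by
      have h1 : εa ≤ 1 / (2 * h) / 2 := by
        rw [hεadef]; have := min_le_right σ (1 / (2 * h)); linarith
      have h2 : εa * h ≤ 1 / (2 * h) / 2 * h := mul_le_mul_of_nonneg_right h1 hh.le
      have h3 : 1 / (2 * h) / 2 * h = 1 / 4 := by field_simp; ring
      rw [hxdef]; linarith [h3 ▸ h2]
    refine ⟨εa, ?_, ?_, ?_⟩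
    · rw [show |(0 : ℝ)| = 0 by norm_num]; exact hεa0
    · linarith
    · have hE : Ef h 0 εa = Real.exp x := by rw [Ef, hxdef]; ring_nf
      have hF : Real.exp (-((εa + 0) * h)) = Real.exp (-x) := by rw [hxdef]; ring_nf
      have hexp1 : (1 - x) * Real.exp x ≤ 1 := by
        have h1 : -x + 1 ≤ Real.exp (-x) := Real.add_one_le_exp _
        have h2 := mul_le_mul_of_nonneg_right h1 (le_of_lt (Real.exp_pos x))
        calc (1 - x) * Real.exp x = (-x + 1) * Real.exp x := by ring
          _ ≤ Real.exp (-x) * Real.exp x := h2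
          _ = 1 := by rw [← Real.exp_add]; simp
      have hEub : Real.exp x - 1 - x ≤ 4 / 3 * x ^ 2 := by
        nlinarith [Real.exp_pos x, Real.add_one_le_exp x]
      have hFle : Real.exp (-x) ≤ 1 := Real.exp_le_one_iff.mpr (by linarith)
      unfold Af Bf
      rw [hE, hF]
      have hxh : εa * h = x := hxdef.symm
      rw [hxh]
      have hB' : x ≤ 1 + x - Real.exp (-x) := by linarith
      have hεa2 : εa ^ 2 ≤ σ ^ 2 / 4 := by nlinarith
      have hA' : εa ^ 2 * (Real.exp x - 1 - x) ≤ εa ^ 2 * (4 / 3 * x ^ 2) :=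
        mul_le_mul_of_nonneg_left hEub (sq_nonneg εa)
      have hgoal : εa ^ 2 * (4 / 3 * x ^ 2) < σ ^ 2 * x := by
        have hst : εa ^ 2 * (4 / 3 * x ^ 2) ≤ σ ^ 2 / 4 * (4 / 3 * x ^ 2) := by
          nlinarith [sq_nonneg x]
        nlinarith [hst, mul_pos (mul_pos (pow_pos hσ 2) hx0)
          (show (0:ℝ) < 1 - x / 3 by linarith)]
      have hBx : σ ^ 2 * x ≤ σ ^ 2 * (1 + x - Real.exp (-x)) := by nlinarith
      linarith

lemma witness_neg (h σ w : ℝ) (hh : 0 < h) (hσ : 0 < σ) (hw : w = -1 ∨ w = 0) :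
    σ ^ 2 * Bf h w (σ + 2 + (6 + 4 * h) / h) < Af h w (σ + 2 + (6 + 4 * h) / h) := by
  obtain ⟨c, hc⟩ : ∃ c : ℝ, c = (6 + 4 * h) / h := ⟨_, rfl⟩
  have hc0 : 0 < c := by rw [hc]; positivity
  have hch : c * h = 6 + 4 * h := by rw [hc]; field_simp
  obtain ⟨εb, hεb⟩ : ∃ e : ℝ, e = σ + 2 + c := ⟨_, rfl⟩
  have hgoal_eq : σ + 2 + (6 + 4 * h) / h = εb := by rw [hεb, hc]
  rw [hgoal_eq]
  have hεb2 : 2 < εb := by rw [hεb]; linarith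
  obtain ⟨s, hs⟩ : ∃ e : ℝ, e = (εb - 1) * h := ⟨_, rfl⟩
  have hsh : εb * h = s + h := by rw [hs]; ring
  have hseq : s = (σ + 1) * h + (6 + 4 * h) := by
    rw [hs, hεb]; linear_combination hch
  have hs6 : 6 + 4 * h ≤ s := by
    rw [hseq]; nlinarith [mul_pos (show (0:ℝ) < σ + 1 by linarith) hh]
  have hs0 : 0 < s := by linarith
  have hEc : (1 + s / 2) ^ 2 ≤ Ef h w εb := by
    have h1 : s / 2 + 1 ≤ Real.exp (s / 2) := Real.add_one_le_exp _
    have h2 : (1 + s / 2) ^ 2 ≤ Real.exp (s / 2) ^ 2 := by nlinarith [Real.exp_pos (s / 2)]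
    have h3 : Real.exp (s / 2) ^ 2 = Real.exp s := by
      rw [sq, ← Real.exp_add]; ring_nf
    have h4 : Real.exp s ≤ Ef h w εb := by
      rw [Ef]
      apply Real.exp_le_exp.mpr
      rcases hw with rfl | rfl
      · rw [hs]; nlinarith
      · rw [hs]; nlinarith
    calc (1 + s / 2) ^ 2 ≤ Real.exp (s / 2) ^ 2 := h2
      _ = Real.exp s := h3
      _ ≤ Ef h w εb := h4
  have hF0 : 0 < Real.exp (-((εb + w) * h)) := Real.exp_pos _
  have hs2 : s ^ 2 ≥ 4 + 4 * s + 8 * h := by nlinarith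
  have hEb' : s ^ 2 / 4 - h ≤ Ef h w εb - 1 - εb * h := by
    rw [hsh]; nlinarith
  have hcmp : s ^ 2 / 4 - h ≥ 1 + s + h := by nlinarith
  have hσεb : σ < εb := by rw [hεb]; linarith
  have hσ2 : σ ^ 2 < εb ^ 2 := by nlinarith
  have hpos2 : 0 < s ^ 2 / 4 - h := by linarith
  have hstep : σ ^ 2 * (1 + s + h) < εb ^ 2 * (s ^ 2 / 4 - h) := by
    nlinarith [mul_lt_mul_of_pos_right hσ2 hpos2,
      mul_le_mul_of_nonneg_left hcmp (sq_nonneg σ)]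
  have hA : εb ^ 2 * (s ^ 2 / 4 - h) ≤ εb ^ 2 * (Ef h w εb - 1 - εb * h) :=
    mul_le_mul_of_nonneg_left hEb' (sq_nonneg εb)
  unfold Af Bf
  have hB : σ ^ 2 * (1 + εb * h - Real.exp (-((εb + w) * h))) < σ ^ 2 * (1 + s + h) := by
    rw [hsh]
    have : 1 + (s + h) - Real.exp (-((εb + w) * h)) < 1 + s + h := by linarith
    nlinarith [pow_pos hσ 2]
  linarith

end Stmt7Aux

open Stmt7Aux in
theorem stmt_7 (h σ w : ℝ) (hh : 0 < h) (hσ : 0 < σ)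
    (hw : w = -1 ∨ w = 0) (r : ℝ → ℝ)
    (hr : ∀ ε : ℝ, r ε =
      Real.exp ((ε + w) * h) * (1 + ε * h) * (ε ^ 2 + σ ^ 2) -
        ε ^ 2 * Real.exp (2 * (ε + w) * h) - σ ^ 2) :
    ∃! ε₀ : ℝ, ε₀ ∈ Set.Ioi |w| ∧ r ε₀ = 0 ∧
      ∀ ε ∈ Set.Ioi |w|, (ε < ε₀ → 0 < r ε) ∧ (ε₀ < ε → r ε < 0) := by
  have hrE : ∀ ε, r ε = Ef h w ε * (σ ^ 2 * Bf h w ε - Af h w ε) := by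
    intro ε
    rw [hr]
    simp only [Ef, Af, Bf]
    have e1 : Real.exp (2 * (ε + w) * h)
        = Real.exp ((ε + w) * h) * Real.exp ((ε + w) * h) := by
      rw [← Real.exp_add]; ring_nf
    have e2 : Real.exp ((ε + w) * h) * Real.exp (-((ε + w) * h)) = 1 := by
      rw [← Real.exp_add]; simp
    rw [e1]
    linear_combination (σ ^ 2 : ℝ) * e2
  have sign_neg : ∀ ε, σ ^ 2 * Bf h w ε < Af h w ε → r ε < 0 := by
    intro ε hlt
    rw [hrE]
    exact mul_neg_of_pos_of_neg (Ef_pos _ _ _) (by linarith)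
  have sign_le : ∀ ε, r ε ≤ 0 → σ ^ 2 * Bf h w ε ≤ Af h w ε := by
    intro ε hle
    rw [hrE ε] at hle
    nlinarith [Ef_pos h w ε]
  have sign_pos : ∀ ε, Af h w ε < σ ^ 2 * Bf h w ε → 0 < r ε := by
    intro ε hlt
    rw [hrE]
    exact mul_pos (Ef_pos _ _ _) (by linarith)
  obtain ⟨εa, hεaw, hεalt, hεapos⟩ := witness_pos h σ w hh hσ hw
  set εb : ℝ := σ + 2 + (6 + 4 * h) / h with hεbdef
  have hεbneg := witness_neg h σ w hh hσ hw
  have hab : εa < εb := by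
    have hq : 0 < (6 + 4 * h) / h := by positivity
    rw [hεbdef]; linarith
  have hra : 0 < r εa := sign_pos εa hεapos
  have hrb : r εb < 0 := sign_neg εb hεbneg
  have hcont : Continuous r := by
    have hc : Continuous fun ε => Real.exp ((ε + w) * h) * (1 + ε * h) * (ε ^ 2 + σ ^ 2) -
        ε ^ 2 * Real.exp (2 * (ε + w) * h) - σ ^ 2 := by fun_prop
    exact hc.congr fun x => (hr x).symm
  have hivt := intermediate_value_Icc' (le_of_lt hab) hcont.continuousOn
  have h0mem : (0:ℝ) ∈ Set.Icc (r εb) (r εa) := ⟨le_of_lt hrb, le_of_lt hra⟩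
  obtain ⟨ε₀, hε₀mem, hε₀⟩ := hivt h0mem
  have hε₀w : |w| < ε₀ := lt_of_lt_of_le hεaw hε₀mem.1
  have hsign : ∀ ε ∈ Set.Ioi |w|, (ε < ε₀ → 0 < r ε) ∧ (ε₀ < ε → r ε < 0) := by
    intro ε hε
    constructor
    · intro hlt
      by_contra hc
      push_neg at hc
      have h1 := sign_le ε hc
      have h2 := cross h σ w hh hσ hw hε hlt h1
      have h3 := sign_neg ε₀ h2
      rw [hε₀] at h3
      exact lt_irrefl 0 h3
    · intro hlt
      have h1 := sign_le ε₀ (le_of_eq hε₀)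
      have h2 := cross h σ w hh hσ hw hε₀w hlt h1
      exact sign_neg ε h2
  refine ⟨ε₀, ⟨hε₀w, hε₀, hsign⟩, ?_⟩
  intro y hy
  obtain ⟨hyw, hy0, hysign⟩ := hy
  by_contra hne
  rcases lt_or_gt_of_ne hne with hlt | hgt
  · have := (hsign y hyw).1 hlt
    linarith
  · have := (hsign y hyw).2 hgt
    linarith
end

section
/- Fix h > 0, σ > 0, w real, and a random variable X with E X = 0 and E X² ≤ σ². Then the Winsorised-tilted mean E_{h,w}X := E[X e^{h(X∧w)}]/E[e^{h(X∧w)}] satisfies |E_{h,w}X| ≤ σ e^{h(σ + 2|w|)}. -/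
open MeasureTheory
open scoped ENNReal

theorem stmt_9 {Ω : Type*} [MeasurableSpace Ω] (μ : Measure Ω) [IsProbabilityMeasure μ]
    (h σ w : ℝ) (hh : 0 < h) (hσ : 0 < σ) (X : Ω → ℝ) (hX : Measurable X)
    (hX1 : Integrable X μ) (hX2 : Integrable (fun ω => X ω ^ 2) μ)
    (hmean : ∫ ω, X ω ∂μ = 0) (hvar : ∫ ω, X ω ^ 2 ∂μ ≤ σ ^ 2) :
    |(∫ ω, X ω * Real.exp (h * min (X ω) w) ∂μ) /
        (∫ ω, Real.exp (h * min (X ω) w) ∂μ)| ≤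
      σ * Real.exp (h * (σ + 2 * |w|)) := by
  set c : ℝ := σ + |w| with hc
  have hc0 : 0 < c := by positivity
  -- ∫ |X| ≤ σ by Cauchy-Schwarz
  have habs_int : Integrable (fun ω => |X ω|) μ := hX1.abs
  have habs_le : ∫ ω, |X ω| ∂μ ≤ σ := by
    have hmem : MemLp X (ENNReal.ofReal (2:ℝ)) μ := by
      rw [show ENNReal.ofReal (2:ℝ) = 2 by norm_num]
      exact (memLp_two_iff_integrable_sq hX1.aestronglyMeasurable).2 hX2
    have := integral_mul_le_Lp_mul_Lq_of_nonneg
      (Real.HolderConjugate.two_two) (f := fun ω => |X ω|)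
      (g := fun _ => (1:ℝ)) (μ := μ)
      (Filter.Eventually.of_forall fun ω => abs_nonneg _)
      (Filter.Eventually.of_forall fun ω => one_pos.le)
      hmem.abs
      (memLp_const 1)
    simp only [mul_one, one_pow] at this
    have h1 : ∫ ω, |X ω| ∂μ ≤ (∫ ω, |X ω| ^ (2:ℝ) ∂μ) ^ ((1:ℝ)/2) := by
      simpa using this
    calc ∫ ω, |X ω| ∂μ ≤ (∫ ω, |X ω| ^ (2:ℝ) ∂μ) ^ ((1:ℝ)/2) := h1
      _ = (∫ ω, X ω ^ 2 ∂μ) ^ ((1:ℝ)/2) := by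
          congr 1
          refine integral_congr_ae (Filter.Eventually.of_forall fun ω => ?_)
          show |X ω| ^ (2:ℝ) = X ω ^ 2
          rw [show ((2:ℝ)) = ((2:ℕ):ℝ) by norm_num, Real.rpow_natCast, sq_abs]
      _ ≤ (σ ^ 2) ^ ((1:ℝ)/2) := by
          apply Real.rpow_le_rpow _ hvar (by norm_num)
          have : 0 ≤ ∫ ω, X ω ^ 2 ∂μ :=
            integral_nonneg fun ω => sq_nonneg _
          exact this
      _ = σ := by
          rw [show (σ^2 : ℝ) = σ^(2:ℕ) by norm_num, ← Real.rpow_natCast σ 2,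
            ← Real.rpow_mul hσ.le]
          norm_num
  -- integrability of min and of the exponentials
  have hmin_meas : Measurable fun ω => min (X ω) w := hX.min measurable_const
  have hmin_int : Integrable (fun ω => min (X ω) w) μ := hX1.inf (integrable_const w)
  have hmin_le : ∀ ω, min (X ω) w ≤ |w| := fun ω => le_trans (min_le_right _ _) (le_abs_self w)
  have hexp_le : ∀ ω, Real.exp (h * min (X ω) w) ≤ Real.exp (h * |w|) := fun ω =>
    Real.exp_le_exp.2 (mul_le_mul_of_nonneg_left (hmin_le ω) hh.le)
  have hexp_meas : Measurable fun ω => Real.exp (h * min (X ω) w) :=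
    (measurable_const.mul hmin_meas).exp
  have hexp_int : Integrable (fun ω => Real.exp (h * min (X ω) w)) μ := by
    refine Integrable.mono (integrable_const (Real.exp (h * |w|)))
      hexp_meas.aestronglyMeasurable (Filter.Eventually.of_forall fun ω => ?_)
    rw [Real.norm_eq_abs, Real.norm_eq_abs, abs_of_pos (Real.exp_pos _),
      abs_of_pos (Real.exp_pos _)]
    exact hexp_le ω
  have hnum_int : Integrable (fun ω => X ω * Real.exp (h * min (X ω) w)) μ := by
    refine Integrable.mono (habs_int.mul_const (Real.exp (h * |w|)))
      (hX.mul hexp_meas).aestronglyMeasurable (Filter.Eventually.of_forall fun ω => ?_)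
    simp only [Real.norm_eq_abs, abs_mul, abs_abs, abs_of_pos (Real.exp_pos _)]
    exact mul_le_mul_of_nonneg_left (hexp_le ω) (abs_nonneg _)
  -- numerator bound
  have hnum : |∫ ω, X ω * Real.exp (h * min (X ω) w) ∂μ| ≤ σ * Real.exp (h * |w|) := by
    have hXe_int : Integrable (fun ω => |X ω| * Real.exp (h * min (X ω) w)) μ := by
      refine hnum_int.abs.congr (Filter.Eventually.of_forall fun ω => ?_)
      show |X ω * Real.exp (h * min (X ω) w)| = |X ω| * Real.exp (h * min (X ω) w)
      rw [abs_mul, abs_of_pos (Real.exp_pos _)]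
    calc |∫ ω, X ω * Real.exp (h * min (X ω) w) ∂μ|
        ≤ ∫ ω, |X ω| * Real.exp (h * min (X ω) w) ∂μ := by
          simpa [Real.norm_eq_abs, abs_mul, abs_of_pos (Real.exp_pos _)] using
            norm_integral_le_integral_norm (fun ω => X ω * Real.exp (h * min (X ω) w)) (μ := μ)
      _ ≤ ∫ ω, |X ω| * Real.exp (h * |w|) ∂μ := by
          refine integral_mono hXe_int (habs_int.mul_const _) fun ω => ?_
          exact mul_le_mul_of_nonneg_left (hexp_le ω) (abs_nonneg _)
      _ = (∫ ω, |X ω| ∂μ) * Real.exp (h * |w|) := integral_mul_const _ _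
      _ ≤ σ * Real.exp (h * |w|) :=
          mul_le_mul_of_nonneg_right habs_le (Real.exp_pos _).le
  -- ∫ min ≥ -c
  have hmmean : -c ≤ ∫ ω, min (X ω) w ∂μ := by
    have : ∫ ω, (-|X ω| - |w|) ∂μ ≤ ∫ ω, min (X ω) w ∂μ := by
      refine integral_mono ((habs_int.neg).sub (integrable_const _)) hmin_int fun ω => ?_
      rcases le_total (X ω) w with hle | hle
      · rw [min_eq_left hle]
        have := neg_abs_le (X ω)
        linarith [abs_nonneg w]
      · rw [min_eq_right hle]
        have := neg_abs_le w
        linarith [abs_nonneg (X ω)]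
    have heq : ∫ ω, (-|X ω| - |w|) ∂μ = -(∫ ω, |X ω| ∂μ) - |w| := by
      have h1 : Integrable (fun ω => -|X ω|) μ := habs_int.neg'
      rw [integral_sub h1 (integrable_const _), integral_neg, integral_const]
      simp
    rw [heq] at this
    simp only [hc]
    linarith
  -- denominator lower bound via Jensen (tangent line to exp)
  have hden : Real.exp (-(h * c)) ≤ ∫ ω, Real.exp (h * min (X ω) w) ∂μ := by
    have hpt : ∀ ω, Real.exp (-(h*c)) * (h * min (X ω) w + h*c + 1) ≤
        Real.exp (h * min (X ω) w) := by
      intro ω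
      have := Real.add_one_le_exp (h * min (X ω) w + h*c)
      calc Real.exp (-(h*c)) * (h * min (X ω) w + h*c + 1)
          ≤ Real.exp (-(h*c)) * Real.exp (h * min (X ω) w + h*c) :=
            mul_le_mul_of_nonneg_left this (Real.exp_pos _).le
        _ = Real.exp (h * min (X ω) w) := by rw [← Real.exp_add]; ring_nf
    have hfe : (fun ω => h * min (X ω) w + h*c + 1)
        = fun ω => h * min (X ω) w + (h*c + 1) := by funext ω; ring
    have hint : Integrable (fun ω => Real.exp (-(h*c)) * (h * min (X ω) w + h*c + 1)) μ := by
      apply Integrable.const_mul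
      rw [hfe]
      exact (hmin_int.const_mul h).add (integrable_const _)
    have := integral_mono hint hexp_int hpt
    have heval : ∫ ω, Real.exp (-(h*c)) * (h * min (X ω) w + h*c + 1) ∂μ
        = Real.exp (-(h*c)) * (h * (∫ ω, min (X ω) w ∂μ) + h*c + 1) := by
      rw [integral_const_mul]
      congr 1
      rw [hfe, integral_add (hmin_int.const_mul h) (integrable_const _),
        integral_const_mul, integral_const]
      simp
      ring
    rw [heval] at this
    have : Real.exp (-(h*c)) * 1 ≤
        Real.exp (-(h*c)) * (h * (∫ ω, min (X ω) w ∂μ) + h*c + 1) := by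
      apply mul_le_mul_of_nonneg_left _ (Real.exp_pos _).le
      nlinarith
    linarith
  have hden_pos : 0 < ∫ ω, Real.exp (h * min (X ω) w) ∂μ :=
    lt_of_lt_of_le (Real.exp_pos _) hden
  -- combine
  rw [abs_div, abs_of_pos hden_pos, div_le_iff₀ hden_pos]
  calc |∫ ω, X ω * Real.exp (h * min (X ω) w) ∂μ|
      ≤ σ * Real.exp (h * |w|) := hnum
    _ = σ * Real.exp (h * (σ + 2*|w|)) * Real.exp (-(h*c)) := by
        rw [mul_assoc, ← Real.exp_add]
        congr 2
        simp only [hc]; ring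
    _ ≤ σ * Real.exp (h * (σ + 2*|w|)) * ∫ ω, Real.exp (h * min (X ω) w) ∂μ := by
        apply mul_le_mul_of_nonneg_left hden (by positivity)
end

section
/- Fix h > 0, w real, and a random variable X with E(0∨X) < ∞. Then the Winsorised-tilted mean E_{h,w}X := E[X e^{h(X∧w)}]/E[e^{h(X∧w)}] is nondecreasing in h ∈ (0,∞). -/
open MeasureTheory

private lemma exp_int {Ω : Type*} [MeasurableSpace Ω] (μ : Measure Ω) [IsProbabilityMeasure μ]
    (w : ℝ) (X : Ω → ℝ) (hX : Measurable X) (h : ℝ) (hh : 0 ≤ h) :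
    Integrable (fun ω => Real.exp (h * min (X ω) w)) μ := by
  refine (integrable_const (Real.exp (h * w))).mono'
    ((Real.measurable_exp.comp ((hX.min measurable_const).const_mul h)).aestronglyMeasurable)
    (Filter.Eventually.of_forall fun ω => ?_)
  rw [Real.norm_eq_abs, abs_of_pos (Real.exp_pos _)]
  exact Real.exp_le_exp.mpr (mul_le_mul_of_nonneg_left (min_le_right _ _) hh)

private lemma mul_exp_int {Ω : Type*} [MeasurableSpace Ω] (μ : Measure Ω) [IsProbabilityMeasure μ]
    (w : ℝ) (X : Ω → ℝ) (hX : Measurable X)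
    (hint : Integrable (fun ω => max 0 (X ω)) μ) (h : ℝ) (hh : 0 < h) :
    Integrable (fun ω => X ω * Real.exp (h * min (X ω) w)) μ := by
  have hmeas : AEStronglyMeasurable (fun ω => X ω * Real.exp (h * min (X ω) w)) μ :=
    (hX.mul (Real.measurable_exp.comp ((hX.min measurable_const).const_mul h))).aestronglyMeasurable
  have hBint : Integrable
      (fun ω => max 0 (X ω) * Real.exp (h * w) + (|w| * Real.exp (h * w) + 1 / h)) μ :=
    (hint.mul_const _).add (integrable_const _)
  refine hBint.mono' hmeas (Filter.Eventually.of_forall fun ω => ?_)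
  rw [Real.norm_eq_abs, abs_mul, abs_of_pos (Real.exp_pos _)]
  have hCpos : 0 ≤ |w| * Real.exp (h * w) + 1 / h := by positivity
  rcases le_or_gt 0 (X ω) with hx | hx
  · have : |X ω| * Real.exp (h * min (X ω) w) ≤ max 0 (X ω) * Real.exp (h * w) := by
      rw [abs_of_nonneg hx, max_eq_right hx]
      exact mul_le_mul_of_nonneg_left
        (Real.exp_le_exp.mpr (mul_le_mul_of_nonneg_left (min_le_right _ _) hh.le)) hx
    linarith
  · have hmax : max 0 (X ω) * Real.exp (h * w) = 0 := by
      rw [max_eq_left hx.le, zero_mul]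
    rcases le_or_gt w (X ω) with hw | hw
    · have hmin : min (X ω) w = w := min_eq_right hw
      have : |X ω| * Real.exp (h * min (X ω) w) ≤ |w| * Real.exp (h * w) := by
        rw [hmin]
        refine mul_le_mul_of_nonneg_right ?_ (Real.exp_pos _).le
        rw [abs_of_neg hx]
        rcases le_or_gt 0 w with h0 | h0
        · linarith [abs_of_nonneg h0]
        · rw [abs_of_neg h0]; linarith
      have h1h : 0 ≤ 1 / h := by positivity
      linarith
    · have hmin : min (X ω) w = X ω := min_eq_left hw.le
      have key : |X ω| * Real.exp (h * X ω) ≤ 1 / h := by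
        set t : ℝ := -X ω with ht
        have htpos : 0 < t := by simp [ht]; linarith
        have h1 : h * t ≤ Real.exp (h * t) := by
          have := Real.add_one_le_exp (h * t)
          linarith
        have h2 : |X ω| = t := by rw [abs_of_neg hx]
        rw [h2]
        have h3 : h * X ω = -(h * t) := by ring
        rw [h3, Real.exp_neg]
        rw [← div_eq_mul_inv, div_le_div_iff₀ (Real.exp_pos _) hh]
        nlinarith
      rw [hmin]
      have hwpos : 0 ≤ |w| * Real.exp (h * w) := by positivity
      linarith

private lemma pointwise_key (h₁ h₂ w a b : ℝ) (hle : h₁ ≤ h₂) :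
    0 ≤ (a - b) * (Real.exp (h₂ * min a w) * Real.exp (h₁ * min b w) -
      Real.exp (h₁ * min a w) * Real.exp (h₂ * min b w)) := by
  have main : ∀ x y : ℝ, y ≤ x →
      Real.exp (h₁ * min x w) * Real.exp (h₂ * min y w) ≤
        Real.exp (h₂ * min x w) * Real.exp (h₁ * min y w) := by
    intro x y hxy
    rw [← Real.exp_add, ← Real.exp_add]
    refine Real.exp_le_exp.mpr ?_
    have hmin : min y w ≤ min x w := min_le_min hxy le_rfl
    nlinarith
  rcases le_total b a with hab | hab
  · exact mul_nonneg (by linarith) (by linarith [main a b hab])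
  · nlinarith [main b a hab]

theorem stmt_10 {Ω : Type*} [MeasurableSpace Ω] (μ : Measure Ω) [IsProbabilityMeasure μ]
    (w : ℝ) (X : Ω → ℝ) (hX : Measurable X)
    (hint : Integrable (fun ω => max 0 (X ω)) μ)
    (h₁ h₂ : ℝ) (hh₁ : 0 < h₁) (hle : h₁ ≤ h₂) :
    (∫ ω, X ω * Real.exp (h₁ * min (X ω) w) ∂μ) /
        (∫ ω, Real.exp (h₁ * min (X ω) w) ∂μ) ≤
      (∫ ω, X ω * Real.exp (h₂ * min (X ω) w) ∂μ) /
        (∫ ω, Real.exp (h₂ * min (X ω) w) ∂μ) := by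
  have hh₂ : 0 < h₂ := lt_of_lt_of_le hh₁ hle
  set f₁ : Ω → ℝ := fun ω => Real.exp (h₁ * min (X ω) w) with hf₁
  set f₂ : Ω → ℝ := fun ω => Real.exp (h₂ * min (X ω) w) with hf₂
  set g₁ : Ω → ℝ := fun ω => X ω * Real.exp (h₁ * min (X ω) w) with hg₁
  set g₂ : Ω → ℝ := fun ω => X ω * Real.exp (h₂ * min (X ω) w) with hg₂
  have if₁ : Integrable f₁ μ := exp_int μ w X hX h₁ hh₁.le
  have if₂ : Integrable f₂ μ := exp_int μ w X hX h₂ hh₂.le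
  have ig₁ : Integrable g₁ μ := mul_exp_int μ w X hX hint h₁ hh₁
  have ig₂ : Integrable g₂ μ := mul_exp_int μ w X hX hint h₂ hh₂
  have pf₁ : 0 < ∫ ω, f₁ ω ∂μ := integral_exp_pos if₁
  have pf₂ : 0 < ∫ ω, f₂ ω ∂μ := integral_exp_pos if₂
  rw [div_le_div_iff₀ pf₁ pf₂]
  -- key: ∫ g₁ * ∫ f₂ ≤ ∫ g₂ * ∫ f₁, via nonneg double integral
  have hprod : 0 ≤ ∫ p : Ω × Ω, (X p.1 - X p.2) *
      (Real.exp (h₂ * min (X p.1) w) * Real.exp (h₁ * min (X p.2) w) -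
        Real.exp (h₁ * min (X p.1) w) * Real.exp (h₂ * min (X p.2) w)) ∂(μ.prod μ) :=
    integral_nonneg fun p => pointwise_key h₁ h₂ w (X p.1) (X p.2) hle
  have i1 : Integrable (fun p : Ω × Ω => g₂ p.1 * f₁ p.2) (μ.prod μ) := ig₂.mul_prod if₁
  have i2 : Integrable (fun p : Ω × Ω => g₁ p.1 * f₂ p.2) (μ.prod μ) := ig₁.mul_prod if₂
  have i3 : Integrable (fun p : Ω × Ω => f₂ p.1 * g₁ p.2) (μ.prod μ) := if₂.mul_prod ig₁
  have i4 : Integrable (fun p : Ω × Ω => f₁ p.1 * g₂ p.2) (μ.prod μ) := if₁.mul_prod ig₂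
  have hcongr : (fun p : Ω × Ω => (X p.1 - X p.2) *
      (Real.exp (h₂ * min (X p.1) w) * Real.exp (h₁ * min (X p.2) w) -
        Real.exp (h₁ * min (X p.1) w) * Real.exp (h₂ * min (X p.2) w))) =
      fun p : Ω × Ω => (g₂ p.1 * f₁ p.2 - g₁ p.1 * f₂ p.2) -
        (f₂ p.1 * g₁ p.2 - f₁ p.1 * g₂ p.2) := by
    funext p
    simp only [hf₁, hf₂, hg₁, hg₂]
    ring
  have i12 : Integrable (fun p : Ω × Ω => g₂ p.1 * f₁ p.2 - g₁ p.1 * f₂ p.2) (μ.prod μ) :=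
    i1.sub i2
  have i34 : Integrable (fun p : Ω × Ω => f₂ p.1 * g₁ p.2 - f₁ p.1 * g₂ p.2) (μ.prod μ) :=
    i3.sub i4
  rw [hcongr, integral_sub i12 i34, integral_sub i1 i2, integral_sub i3 i4,
    integral_prod_mul, integral_prod_mul, integral_prod_mul, integral_prod_mul] at hprod
  linarith
end

section
/- Fix h > 0 and a random variable X with E(0∨X) < ∞. Then the Winsorised-tilted mean E_{h,w}X := E[X e^{h(X∧w)}]/E[e^{h(X∧w)}] is nondecreasing in w ∈ ℝ. -/
open MeasureTheory

lemma key_min (w₁ w₂ a b : ℝ) (h1 : w₁ ≤ w₂) (hab : a ≤ b) :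
    min a w₂ + min b w₁ ≤ min a w₁ + min b w₂ := by
  simp only [min_def]
  split_ifs <;> linarith

lemma Q_nonneg (h w₁ w₂ a b : ℝ) (hh : 0 < h) (hle : w₁ ≤ w₂) :
    0 ≤ (a - b) * (Real.exp (h * min a w₂) * Real.exp (h * min b w₁) -
        Real.exp (h * min a w₁) * Real.exp (h * min b w₂)) := by
  rcases le_total a b with hab | hab
  · have hmin := key_min w₁ w₂ a b hle hab
    have : Real.exp (h * min a w₂) * Real.exp (h * min b w₁) ≤
        Real.exp (h * min a w₁) * Real.exp (h * min b w₂) := by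
      rw [← Real.exp_add, ← Real.exp_add, Real.exp_le_exp, ← mul_add, ← mul_add]
      exact mul_le_mul_of_nonneg_left hmin hh.le
    nlinarith
  · have hmin := key_min w₁ w₂ b a hle hab
    have : Real.exp (h * min b w₂) * Real.exp (h * min a w₁) ≤
        Real.exp (h * min b w₁) * Real.exp (h * min a w₂) := by
      rw [← Real.exp_add, ← Real.exp_add, Real.exp_le_exp, ← mul_add, ← mul_add]
      exact mul_le_mul_of_nonneg_left hmin hh.le
    nlinarith

theorem stmt_11 {Ω : Type*} [MeasurableSpace Ω] (μ : Measure Ω) [IsProbabilityMeasure μ]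
    (h : ℝ) (hh : 0 < h) (X : Ω → ℝ) (hX : Measurable X)
    (hint : Integrable (fun ω => max 0 (X ω)) μ)
    (w₁ w₂ : ℝ) (hle : w₁ ≤ w₂) :
    (∫ ω, X ω * Real.exp (h * min (X ω) w₁) ∂μ) /
        (∫ ω, Real.exp (h * min (X ω) w₁) ∂μ) ≤
      (∫ ω, X ω * Real.exp (h * min (X ω) w₂) ∂μ) /
        (∫ ω, Real.exp (h * min (X ω) w₂) ∂μ) := by
  set F : ℝ → Ω → ℝ := fun w ω => Real.exp (h * min (X ω) w) with hF
  set G : ℝ → Ω → ℝ := fun w ω => X ω * Real.exp (h * min (X ω) w) with hG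
  have hFm : ∀ w, Measurable (F w) := fun w =>
    ((hX.min measurable_const).const_mul h).exp
  have hFint : ∀ w, Integrable (F w) μ := by
    intro w
    refine Integrable.mono' (integrable_const (Real.exp (h * w))) (hFm w).aestronglyMeasurable ?_
    filter_upwards with ω
    rw [Real.norm_eq_abs, abs_of_pos (Real.exp_pos _), Real.exp_le_exp]
    exact mul_le_mul_of_nonneg_left (min_le_right _ _) hh.le
  have hGint : ∀ w, Integrable (G w) μ := by
    intro w
    have hD : Integrable (fun ω => max 0 (X ω) * Real.exp (h * w) + 1 / h) μ :=
      (hint.mul_const (Real.exp (h * w))).add (integrable_const (1 / h))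
    refine Integrable.mono' hD ((hX.mul (hFm w)).aestronglyMeasurable) ?_
    filter_upwards with ω
    rw [Real.norm_eq_abs, abs_mul, abs_of_pos (Real.exp_pos _)]
    rcases le_total 0 (X ω) with hx | hx
    · have h1 : |X ω| = max 0 (X ω) := by
        rw [abs_of_nonneg hx, max_eq_right hx]
      rw [h1]
      have h2 : Real.exp (h * min (X ω) w) ≤ Real.exp (h * w) :=
        Real.exp_le_exp.mpr (mul_le_mul_of_nonneg_left (min_le_right _ _) hh.le)
      have h3 : max 0 (X ω) * Real.exp (h * min (X ω) w) ≤ max 0 (X ω) * Real.exp (h * w) :=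
        mul_le_mul_of_nonneg_left h2 (le_max_left _ _)
      have : (0:ℝ) ≤ 1 / h := by positivity
      linarith
    · have h1 : max 0 (X ω) = 0 := max_eq_left hx
      have h2 : Real.exp (h * min (X ω) w) ≤ Real.exp (h * X ω) :=
        Real.exp_le_exp.mpr (mul_le_mul_of_nonneg_left (min_le_left _ _) hh.le)
      have h4 : |X ω| * Real.exp (h * X ω) ≤ 1 / h := by
        rw [abs_of_nonpos hx]
        rw [div_eq_inv_mul, mul_one, ← mul_le_mul_iff_right₀ hh, ← mul_assoc, mul_inv_cancel₀ hh.ne']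
        have h5 : -(h * X ω) ≤ Real.exp (-(h * X ω)) := by
          linarith [Real.add_one_le_exp (-(h * X ω))]
        calc h * -X ω * Real.exp (h * X ω) = -(h * X ω) * Real.exp (h * X ω) := by ring
          _ ≤ Real.exp (-(h * X ω)) * Real.exp (h * X ω) :=
            mul_le_mul_of_nonneg_right h5 (Real.exp_pos _).le
          _ = 1 := by rw [← Real.exp_add]; simp
      have h6 : |X ω| * Real.exp (h * min (X ω) w) ≤ |X ω| * Real.exp (h * X ω) :=
        mul_le_mul_of_nonneg_left h2 (abs_nonneg _)
      have : (0:ℝ) ≤ max 0 (X ω) * Real.exp (h * w) := by positivity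
      linarith
  have hFpos : ∀ w, 0 < ∫ ω, F w ω ∂μ := by
    intro w
    rw [integral_pos_iff_support_of_nonneg (fun ω => (Real.exp_pos _).le) (hFint w)]
    have : Function.support (F w) = Set.univ := by
      ext ω; simp [hF, (Real.exp_pos _).ne']
    rw [this]
    simp
  rw [div_le_div_iff₀ (hFpos w₁) (hFpos w₂)]
  -- integrability on the product
  have i1 : Integrable (fun z : Ω × Ω => G w₂ z.1 * F w₁ z.2) (μ.prod μ) :=
    (hGint w₂).mul_prod (hFint w₁)
  have i2 : Integrable (fun z : Ω × Ω => G w₁ z.1 * F w₂ z.2) (μ.prod μ) :=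
    (hGint w₁).mul_prod (hFint w₂)
  have i3 : Integrable (fun z : Ω × Ω => F w₂ z.1 * G w₁ z.2) (μ.prod μ) :=
    (hFint w₂).mul_prod (hGint w₁)
  have i4 : Integrable (fun z : Ω × Ω => F w₁ z.1 * G w₂ z.2) (μ.prod μ) :=
    (hFint w₁).mul_prod (hGint w₂)
  have i12 : Integrable (fun z : Ω × Ω => G w₂ z.1 * F w₁ z.2 - G w₁ z.1 * F w₂ z.2)
      (μ.prod μ) := i1.sub i2
  have i34 : Integrable (fun z : Ω × Ω => F w₂ z.1 * G w₁ z.2 - F w₁ z.1 * G w₂ z.2)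
      (μ.prod μ) := i3.sub i4
  have key : (0:ℝ) ≤ ∫ z, (X z.1 - X z.2) *
      (F w₂ z.1 * F w₁ z.2 - F w₁ z.1 * F w₂ z.2) ∂(μ.prod μ) :=
    integral_nonneg fun z => Q_nonneg h w₁ w₂ (X z.1) (X z.2) hh hle
  have hexp : (fun z : Ω × Ω => (X z.1 - X z.2) *
      (F w₂ z.1 * F w₁ z.2 - F w₁ z.1 * F w₂ z.2)) =
      fun z => (G w₂ z.1 * F w₁ z.2 - G w₁ z.1 * F w₂ z.2) -
        (F w₂ z.1 * G w₁ z.2 - F w₁ z.1 * G w₂ z.2) := by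
    funext z; simp only [hF, hG]; ring
  rw [hexp] at key
  have e0 : (∫ z, ((fun z : Ω × Ω => G w₂ z.1 * F w₁ z.2 - G w₁ z.1 * F w₂ z.2) z -
      (fun z : Ω × Ω => F w₂ z.1 * G w₁ z.2 - F w₁ z.1 * G w₂ z.2) z) ∂(μ.prod μ)) =
      (∫ z, (G w₂ z.1 * F w₁ z.2 - G w₁ z.1 * F w₂ z.2) ∂(μ.prod μ)) -
      (∫ z, (F w₂ z.1 * G w₁ z.2 - F w₁ z.1 * G w₂ z.2) ∂(μ.prod μ)) :=
    integral_sub i12 i34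
  have e12 : (∫ z, ((fun z : Ω × Ω => G w₂ z.1 * F w₁ z.2) z -
      (fun z : Ω × Ω => G w₁ z.1 * F w₂ z.2) z) ∂(μ.prod μ)) =
      (∫ z : Ω × Ω, G w₂ z.1 * F w₁ z.2 ∂(μ.prod μ)) -
      (∫ z : Ω × Ω, G w₁ z.1 * F w₂ z.2 ∂(μ.prod μ)) := integral_sub i1 i2
  have e34 : (∫ z, ((fun z : Ω × Ω => F w₂ z.1 * G w₁ z.2) z -
      (fun z : Ω × Ω => F w₁ z.1 * G w₂ z.2) z) ∂(μ.prod μ)) =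
      (∫ z : Ω × Ω, F w₂ z.1 * G w₁ z.2 ∂(μ.prod μ)) -
      (∫ z : Ω × Ω, F w₁ z.1 * G w₂ z.2 ∂(μ.prod μ)) := integral_sub i3 i4
  simp only at e0 e12 e34
  rw [e0, e12, e34, integral_prod_mul, integral_prod_mul, integral_prod_mul,
    integral_prod_mul] at key
  simp only [hF, hG] at key ⊢
  nlinarith [key]
end

section
/- Fix h > 0. Define ρ(ε) := (e^{(1+ε)h} − 1)/(1 + ε e^{(1+ε)h}) for ε > 0. Then ρ is strictly decreasing on (0,∞), and consequently ρ(ε) < e^h − 1 for every ε > 0, with sup_{ε>0} ρ(ε) = e^h − 1. -/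
theorem stmt_14 (h : ℝ) (hh : 0 < h) (ρ : ℝ → ℝ)
    (hρ : ∀ ε : ℝ, ρ ε =
      (Real.exp ((1 + ε) * h) - 1) / (1 + ε * Real.exp ((1 + ε) * h))) :
    StrictAntiOn ρ (Set.Ioi 0) ∧
    (∀ ε : ℝ, 0 < ε → ρ ε < Real.exp h - 1) ∧
    IsLUB (ρ '' Set.Ioi 0) (Real.exp h - 1) := by
  have hρf : ρ = fun ε => (Real.exp ((1 + ε) * h) - 1) / (1 + ε * Real.exp ((1 + ε) * h)) :=
    funext hρ
  set g : ℝ → ℝ := fun ε => (Real.exp ((1 + ε) * h) - 1) / (1 + ε * Real.exp ((1 + ε) * h))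
    with hg
  -- denominator positivity on Ici 0
  have hD : ∀ ε : ℝ, 0 ≤ ε → 0 < 1 + ε * Real.exp ((1 + ε) * h) := by
    intro ε hε
    have := Real.exp_pos ((1 + ε) * h)
    nlinarith
  -- derivative
  have hderiv : ∀ ε : ℝ, HasDerivAt g
      ((Real.exp ((1 + ε) * h) * (1 + (1 + ε) * h - Real.exp ((1 + ε) * h)))
        / (1 + ε * Real.exp ((1 + ε) * h)) ^ 2 ) ε ∨ True := fun _ => Or.inr trivial
  have hasD : ∀ ε : ℝ, 0 ≤ ε → HasDerivAt g
      ((Real.exp ((1 + ε) * h) * (1 + (1 + ε) * h - Real.exp ((1 + ε) * h)))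
        / (1 + ε * Real.exp ((1 + ε) * h)) ^ 2) ε := by
    intro ε hε
    have hE : HasDerivAt (fun x : ℝ => Real.exp ((1 + x) * h)) (Real.exp ((1 + ε) * h) * h) ε := by
      have h1 : HasDerivAt (fun x : ℝ => (1 + x) * h) h ε := by
        simpa using ((hasDerivAt_id ε).const_add 1).mul_const h
      exact (Real.hasDerivAt_exp _).comp ε h1
    have hN : HasDerivAt (fun x : ℝ => Real.exp ((1 + x) * h) - 1)
        (Real.exp ((1 + ε) * h) * h) ε := hE.sub_const 1
    have hDen : HasDerivAt (fun x : ℝ => 1 + x * Real.exp ((1 + x) * h))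
        (Real.exp ((1 + ε) * h) + ε * (Real.exp ((1 + ε) * h) * h)) ε := by
      have := ((hasDerivAt_id ε).mul hE).const_add 1
      simpa [one_mul] using this
    have hDne : (1 + ε * Real.exp ((1 + ε) * h)) ≠ 0 := (hD ε hε).ne'
    have := hN.div hDen hDne
    refine HasDerivAt.congr_deriv this ?_
    field_simp
    ring
  have hcont : ContinuousOn g (Set.Ici 0) := by
    intro ε hε
    exact (hasD ε hε).continuousAt.continuousWithinAt
  have hneg : ∀ ε : ℝ, 0 < ε →
      (Real.exp ((1 + ε) * h) * (1 + (1 + ε) * h - Real.exp ((1 + ε) * h)))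
        / (1 + ε * Real.exp ((1 + ε) * h)) ^ 2 < 0 := by
    intro ε hε
    have hx : (1 + ε) * h ≠ 0 := by positivity
    have hlt : 1 + (1 + ε) * h < Real.exp ((1 + ε) * h) := by
      have := Real.add_one_lt_exp hx; linarith
    have hE := Real.exp_pos ((1 + ε) * h)
    have hD2 : (0:ℝ) < (1 + ε * Real.exp ((1 + ε) * h)) ^ 2 := by positivity
    apply div_neg_of_neg_of_pos _ hD2
    nlinarith
  have hanti : StrictAntiOn g (Set.Ici 0) := by
    apply strictAntiOn_of_deriv_neg (convex_Ici 0) hcont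
    intro x hx
    rw [interior_Ici] at hx
    rw [(hasD x hx.le).deriv]
    exact hneg x hx
  have hg0 : g 0 = Real.exp h - 1 := by simp [hg]
  have hlt : ∀ ε : ℝ, 0 < ε → g ε < Real.exp h - 1 := by
    intro ε hε
    have := hanti (Set.self_mem_Ici) (le_of_lt hε : (0:ℝ) ≤ ε) hε
    rwa [hg0] at this
  refine ⟨?_, ?_, ?_⟩
  · rw [hρf]; exact hanti.mono (Set.Ioi_subset_Ici le_rfl)
  · intro ε hε; rw [hρ]; exact hlt ε hε
  · rw [hρf]
    constructor
    · rintro x ⟨ε, hε, rfl⟩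
      exact (hlt ε hε).le
    · intro b hb
      by_contra hbl
      push_neg at hbl
      have htend : Filter.Tendsto g (nhdsWithin 0 (Set.Ioi 0)) (nhds (Real.exp h - 1)) := by
        have : ContinuousAt g 0 := (hasD 0 le_rfl).continuousAt
        rw [← hg0]
        exact this.continuousWithinAt.tendsto
      have hev : ∀ᶠ ε in nhdsWithin 0 (Set.Ioi 0), b < g ε :=
        htend.eventually (eventually_gt_nhds hbl)
      obtain ⟨ε, hbε, hε⟩ := (hev.and (eventually_mem_nhdsWithin)).exists
      exact absurd (hb ⟨ε, hε, rfl⟩) (not_le.mpr hbε)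
end

section
/- Fix h > 0 and w ∈ {−1, 0}. Define ρ(ε) := (1 − e^{−(w+ε)h})/ε for ε > −w (so ε > 1 if w = −1, ε > 0 if w = 0). Then ρ(ε) ≤ h / (−L), where L is the unique root u ≤ −1 of u e^u = −e^{hw − 1}; moreover ρ'(ε) has the same sign as (1+εh)e^{−(w+ε)h} − 1, and ρ attains its supremum at ε_* = −(1 + L)/h. -/
theorem stmt_16 (h w L : ℝ) (hh : 0 < h) (hw : w = -1 ∨ w = 0)
    (hL₁ : L ≤ -1) (hL₂ : L * Real.exp L = -Real.exp (h * w - 1))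
    (ρ : ℝ → ℝ)
    (hρ : ∀ ε : ℝ, ρ ε = (1 - Real.exp (-(w + ε) * h)) / ε) :
    (∀ ε : ℝ, -w < ε → ρ ε ≤ h / (-L)) ∧
    (∀ ε : ℝ, -w < ε →
      Real.sign (deriv ρ ε) =
        Real.sign ((1 + ε * h) * Real.exp (-(w + ε) * h) - 1)) ∧
    IsLUB (ρ '' Set.Ioi (-w)) (h / (-L)) ∧
    Filter.Tendsto ρ (nhdsWithin (-(1 + L) / h) (Set.Ioi (-(1 + L) / h)))
      (nhds (h / (-L))) := by
  have hρ' : ρ = fun ε => (1 - Real.exp (-(w + ε) * h)) / ε := funext hρ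
  subst hρ'
  have hL0 : L < 0 := lt_of_le_of_lt hL₁ (by norm_num)
  have hLpos : 0 < -L := by linarith
  have hw0 : 0 ≤ -w := by rcases hw with h' | h' <;> rw [h'] <;> norm_num
  -- exp at the critical exponent
  have hexpL : Real.exp (1 + L - w * h) = -1 / L := by
    have h1 : Real.exp (1 + L - w * h) * Real.exp (h * w - 1) = Real.exp L := by
      rw [← Real.exp_add]; ring_nf
    have h2 : (0:ℝ) < Real.exp L := Real.exp_pos _
    have h3 : Real.exp (1 + L - w * h) * L = -1 := by
      have h4 : Real.exp (1 + L - w * h) * (L * Real.exp L)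
          = Real.exp (1 + L - w * h) * (-Real.exp (h * w - 1)) := by rw [hL₂]
      have h5 : Real.exp (1 + L - w * h) * L * Real.exp L = -Real.exp L := by
        nlinarith [h1, h4]
      have := mul_right_cancel₀ (ne_of_gt h2) (by linarith : Real.exp (1 + L - w * h) * L * Real.exp L = (-1) * Real.exp L)
      linarith [this]
    rw [eq_div_iff (ne_of_lt hL0)]
    linarith [h3]
  have hexpL' : Real.exp (-(1 + L - w * h)) = -L := by
    rw [Real.exp_neg, hexpL]
    field_simp
  -- key convexity inequality
  have hkey : ∀ y : ℝ, L * Real.exp y ≤ -(y - (1 + L - w * h) + 1) := by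
    intro y
    have h1 := Real.add_one_le_exp (y - (1 + L - w * h))
    have h2 : Real.exp (y - (1 + L - w * h)) = Real.exp y * (-L) := by
      rw [Real.exp_sub, hexpL]
      field_simp
    rw [h2] at h1
    nlinarith [h1]
  -- Part 1
  have part1 : ∀ ε : ℝ, -w < ε →
      (1 - Real.exp (-(w + ε) * h)) / ε ≤ h / (-L) := by
    intro ε hε
    have hε0 : 0 < ε := lt_of_le_of_lt hw0 hε
    rw [div_le_div_iff₀ hε0 hLpos]
    nlinarith [hkey (-(w + ε) * h)]
  -- derivative of the inner function
  have hf : ∀ ε : ℝ, HasDerivAt (fun ε => 1 - Real.exp (-(w + ε) * h))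
      (h * Real.exp (-(w + ε) * h)) ε := by
    intro ε
    have h1 : HasDerivAt (fun ε : ℝ => -(w + ε) * h) (-h) ε := by
      simpa using ((hasDerivAt_id ε).const_add w).neg.mul_const h
    have h2 := (Real.hasDerivAt_exp (-(w + ε) * h)).comp ε h1
    have h3 := h2.const_sub 1
    convert h3 using 1
    all_goals first | rfl | ring
  have hderiv : ∀ ε : ℝ, ε ≠ 0 →
      HasDerivAt (fun ε => (1 - Real.exp (-(w + ε) * h)) / ε)
      ((h * Real.exp (-(w + ε) * h) * ε - (1 - Real.exp (-(w + ε) * h))) / ε ^ 2) ε := by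
    intro ε hε
    have := (hf ε).div (hasDerivAt_id ε) hε
    convert this using 1
    all_goals first | rfl | (simp only [id]; field_simp) | (simp only [id]; field_simp; ring)
  -- sign of a quotient by a positive number
  have hsign : ∀ a b : ℝ, 0 < b → Real.sign (a / b) = Real.sign a := by
    intro a b hb
    rcases lt_trichotomy a 0 with ha | ha | ha
    · rw [Real.sign_of_neg ha, Real.sign_of_neg (div_neg_of_neg_of_pos ha hb)]
    · rw [ha, zero_div]
    · rw [Real.sign_of_pos ha, Real.sign_of_pos (div_pos ha hb)]
  -- Part 2
  have part2 : ∀ ε : ℝ, -w < ε →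
      Real.sign (deriv (fun ε => (1 - Real.exp (-(w + ε) * h)) / ε) ε) =
        Real.sign ((1 + ε * h) * Real.exp (-(w + ε) * h) - 1) := by
    intro ε hε
    have hε0 : 0 < ε := lt_of_le_of_lt hw0 hε
    rw [(hderiv ε hε0.ne').deriv]
    have hnum : h * Real.exp (-(w + ε) * h) * ε - (1 - Real.exp (-(w + ε) * h))
        = (1 + ε * h) * Real.exp (-(w + ε) * h) - 1 := by ring
    rw [hnum, hsign _ _ (by positivity)]
  refine ⟨part1, part2, ?_⟩
  suffices hS : -w ≤ -(1 + L) / h ∧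
      Filter.Tendsto (fun ε => (1 - Real.exp (-(w + ε) * h)) / ε)
        (nhdsWithin (-(1 + L) / h) (Set.Ioi (-(1 + L) / h))) (nhds (h / (-L))) by
    obtain ⟨hge, hts⟩ := hS
    refine ⟨⟨?_, ?_⟩, hts⟩
    · rintro x ⟨ε, hε, rfl⟩
      exact part1 ε hε
    · intro b hb
      refine le_of_tendsto hts ?_
      filter_upwards [self_mem_nhdsWithin] with ε hε
      exact hb ⟨ε, lt_of_le_of_lt hge hε, rfl⟩
  rcases hw with hw | hw <;> subst hw
  · -- w = -1
    have key : -L * Real.exp (L + 1 + h) = 1 := by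
      have h1 : Real.exp (L + 1 + h) = Real.exp L * Real.exp (1 + h) := by
        rw [← Real.exp_add]; ring_nf
      have h2 : Real.exp (h * (-1) - 1) * Real.exp (1 + h) = 1 := by
        rw [← Real.exp_add, show h * (-1) - 1 + (1 + h) = 0 by ring, Real.exp_zero]
      linear_combination (-L) * h1 - Real.exp (1 + h) * hL₂ + h2
    have hL3 : L ≤ -1 - h := by
      have h1 : Real.exp (L + 1 + h) ≤ 1 := by
        nlinarith [Real.exp_pos (L + 1 + h)]
      have := Real.exp_le_one_iff.mp h1
      linarith
    have hge : -(-1 : ℝ) ≤ -(1 + L) / h := by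
      rw [le_div_iff₀ hh]
      linarith
    have hne : (-(1 + L) / h) ≠ 0 := by
      have : (0:ℝ) < -(1 + L) / h := lt_of_lt_of_le (by norm_num) hge
      exact this.ne'
    have harg : -((-1 : ℝ) + -(1 + L) / h) * h = 1 + L - (-1) * h := by
      field_simp
      ring
    have hval : (1 - Real.exp (-((-1 : ℝ) + -(1 + L) / h) * h)) / (-(1 + L) / h)
        = h / (-L) := by
      rw [harg, hexpL]
      have h1L : 1 + L ≠ 0 := by intro hc; linarith
      have h1L' : (-1 : ℝ) - L ≠ 0 := by intro hc; linarith [hL3]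
      have hLne : L ≠ 0 := ne_of_lt hL0
      have hq : -L - L ^ 2 ≠ 0 := by
        have := mul_ne_zero hLne h1L
        intro hc
        apply this
        linear_combination -hc
      field_simp
      have hq2 : L * (-L + -1) ≠ 0 := mul_ne_zero hLne (by intro hc; apply h1L; linarith)
      ring
    refine ⟨hge, ?_⟩
    have hcont : ContinuousAt (fun ε : ℝ => (1 - Real.exp (-((-1 : ℝ) + ε) * h)) / ε)
        (-(1 + L) / h) := by
      apply ContinuousAt.div
      · fun_prop
      · exact continuousAt_id
      · exact hne
    rw [← hval]
    exact hcont.tendsto.mono_left nhdsWithin_le_nhds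
  · -- w = 0
    have hL4 : L = -1 := by
      by_contra hc
      have hne : -(L + 1) ≠ 0 := by
        intro hc'
        exact hc (by linarith)
      have h1 := Real.add_one_lt_exp hne
      have h2 : Real.exp (-(L + 1)) * (Real.exp L * Real.exp 1) = 1 := by
        rw [← Real.exp_add, ← Real.exp_add, show -(L + 1) + (L + 1) = 0 by ring,
          Real.exp_zero]
      have h3 : Real.exp (h * 0 - 1) * Real.exp 1 = 1 := by
        rw [← Real.exp_add, show h * 0 - 1 + 1 = 0 by ring, Real.exp_zero]
      have h4 : L * (Real.exp L * Real.exp 1) = -1 := by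
        linear_combination Real.exp 1 * hL₂ - h3
      have h1' : -L < Real.exp (-(L + 1)) := by linarith [h1]
      have h5 : (-L) * (Real.exp L * Real.exp 1)
          < Real.exp (-(L + 1)) * (Real.exp L * Real.exp 1) :=
        mul_lt_mul_of_pos_right h1' (mul_pos (Real.exp_pos L) (Real.exp_pos 1))
      nlinarith [h5, h2, h4]
    subst hL4
    have e0 : -(1 + (-1 : ℝ)) / h = 0 := by norm_num
    have eL : h / (-(-1 : ℝ)) = h := by norm_num
    rw [e0, eL]
    refine ⟨by norm_num, ?_⟩
    have hf0 : HasDerivAt (fun ε : ℝ => 1 - Real.exp (-((0 : ℝ) + ε) * h)) h 0 := by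
      have := hf 0
      simpa using this
    rw [hasDerivAt_iff_tendsto_slope] at hf0
    have hslope : ∀ ε : ℝ, slope (fun ε : ℝ => 1 - Real.exp (-((0 : ℝ) + ε) * h)) 0 ε
        = (1 - Real.exp (-((0 : ℝ) + ε) * h)) / ε := by
      intro ε
      simp [slope_def_field]
    have hmono : nhdsWithin (0 : ℝ) (Set.Ioi 0) ≤ nhdsWithin (0 : ℝ) {(0 : ℝ)}ᶜ := by
      apply nhdsWithin_mono
      intro x hx
      exact ne_of_gt hx
    have := hf0.mono_left hmono
    refine this.congr ?_
    intro ε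
    exact hslope ε
end

section
/- Fix h > 0 and real c₁, c₂, k, and c₃ > 0, and w real. Define d̃(s) := c₁ + c₂ s + c₃ s² − (s − k)e^{h(s∧w)} for s ∈ ℝ. If d̃(s) ≥ 0 for all s ∈ ℝ, then d̃ has at most one zero in (−∞, w) and at most one zero in [w, ∞); in particular d̃ has at most two zeros. -/
lemma sinh_lt_mul_cosh' {x : ℝ} (hx : 0 < x) : Real.sinh x < x * Real.cosh x := by
  have hmono : StrictMonoOn (fun y : ℝ => y * Real.cosh y - Real.sinh y) (Set.Ici 0) := by
    have hder : ∀ y : ℝ, HasDerivAt (fun y : ℝ => y * Real.cosh y - Real.sinh y)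
        (y * Real.sinh y) y := by
      intro y
      have h1 := ((hasDerivAt_id y).mul (Real.hasDerivAt_cosh y)).sub (Real.hasDerivAt_sinh y)
      have h2 : 1 * Real.cosh y + id y * Real.sinh y - Real.cosh y = y * Real.sinh y := by
        simp only [id]; ring
      rw [h2] at h1
      exact h1
    refine strictMonoOn_of_deriv_pos (convex_Ici 0) ?_ ?_
    · exact (Continuous.sub (continuous_id.mul Real.continuous_cosh) Real.continuous_sinh).continuousOn
    · intro y hy
      rw [interior_Ici, Set.mem_Ioi] at hy
      rw [(hder y).deriv]
      exact mul_pos hy (Real.sinh_pos_iff.mpr hy)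
  have := hmono (Set.self_mem_Ici) (Set.mem_Ici.mpr hx.le) hx
  simp at this
  linarith

set_option maxHeartbeats 1000000 in
theorem stmt_18 (h c₁ c₂ c₃ k w : ℝ) (hh : 0 < h) (hc₃ : 0 < c₃)
    (d : ℝ → ℝ)
    (hd : ∀ s : ℝ, d s = c₁ + c₂ * s + c₃ * s ^ 2 -
      (s - k) * Real.exp (h * min s w))
    (hnn : ∀ s : ℝ, 0 ≤ d s) :
    (∀ s₁ s₂ : ℝ, s₁ < w → s₂ < w → d s₁ = 0 → d s₂ = 0 → s₁ = s₂) ∧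
    (∀ s₁ s₂ : ℝ, w ≤ s₁ → w ≤ s₂ → d s₁ = 0 → d s₂ = 0 → s₁ = s₂) ∧
    ({s : ℝ | d s = 0}).encard ≤ 2 := by
  -- At any zero z < w, both d(z)=0 and d'(z)=0 hold for the smooth formula.
  have zeroEq : ∀ z : ℝ, z < w → d z = 0 →
      (c₁ + c₂ * z + c₃ * z ^ 2 = (z - k) * Real.exp (h * z)) ∧
      (c₂ + 2 * c₃ * z = Real.exp (h * z) + (z - k) * (h * Real.exp (h * z))) := by
    intro z hzw hz0
    have hval : c₁ + c₂ * z + c₃ * z ^ 2 - (z - k) * Real.exp (h * z) = 0 := by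
      have hz := hd z
      rw [min_eq_left hzw.le] at hz
      rw [hz] at hz0
      linarith
    refine ⟨by linarith, ?_⟩
    -- derivative is zero at the local (global) min z
    set F : ℝ → ℝ := fun s => c₁ + c₂ * s + c₃ * s ^ 2 - (s - k) * Real.exp (h * s) with hF
    have hdF : HasDerivAt F
        (c₂ + 2 * c₃ * z - (Real.exp (h * z) + (z - k) * (h * Real.exp (h * z)))) z := by
      have he : HasDerivAt (fun s : ℝ => Real.exp (h * s)) (Real.exp (h * z) * h) z := by
        have hm : HasDerivAt (fun s : ℝ => h * s) h z := by
          simpa using (hasDerivAt_id z).const_mul h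
        exact (Real.hasDerivAt_exp (h * z)).comp z hm
      have hprod : HasDerivAt (fun s : ℝ => (s - k) * Real.exp (h * s))
          (1 * Real.exp (h * z) + (z - k) * (Real.exp (h * z) * h)) z :=
        ((hasDerivAt_id z).sub_const k).mul he
      have hpoly : HasDerivAt (fun s : ℝ => c₁ + c₂ * s + c₃ * s ^ 2)
          (c₂ + 2 * c₃ * z) z := by
        have h1 : HasDerivAt (fun s : ℝ => c₂ * s) c₂ z := by
          simpa using (hasDerivAt_id z).const_mul c₂
        have h2 : HasDerivAt (fun s : ℝ => c₃ * s ^ 2) (c₃ * (2 * z)) z := by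
          have := (hasDerivAt_pow 2 z).const_mul c₃
          simpa using this
        have := ((hasDerivAt_const z c₁).add h1).add h2
        have heq : 0 + c₂ + c₃ * (2 * z) = c₂ + 2 * c₃ * z := by ring
        rw [heq] at this
        exact this
      have := hpoly.sub hprod
      have heq : c₂ + 2 * c₃ * z - (1 * Real.exp (h * z) + (z - k) * (Real.exp (h * z) * h))
          = c₂ + 2 * c₃ * z - (Real.exp (h * z) + (z - k) * (h * Real.exp (h * z))) := by ring
      rw [heq] at this
      exact this
    have hmin : IsLocalMin F z := by
      have hmind : IsLocalMin d z := by
        refine Filter.Eventually.of_forall fun s => ?_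
        rw [hz0]; exact hnn s
      refine hmind.congr ?_
      filter_upwards [Iio_mem_nhds hzw] with s hs
      rw [hd s, min_eq_left (le_of_lt hs)]
    have := hmin.hasDerivAt_eq_zero hdF
    linarith
  have main : ∀ u v : ℝ, u < v → v < w → d u = 0 → d v = 0 → False := by
    intro u v huv hvw hu0 hv0
    obtain ⟨eq1, eq2⟩ := zeroEq u (huv.trans hvw) hu0
    obtain ⟨eq3, eq4⟩ := zeroEq v hvw hv0
    obtain ⟨A, hAdef⟩ : ∃ A : ℝ, Real.exp (h * u) = A := ⟨_, rfl⟩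
    obtain ⟨B, hBdef⟩ : ∃ B : ℝ, Real.exp (h * v) = B := ⟨_, rfl⟩
    obtain ⟨t, htdef⟩ : ∃ t : ℝ, Real.exp (h * (v - u) / 2) = t := ⟨_, rfl⟩
    rw [hAdef] at eq1 eq2
    rw [hBdef] at eq3 eq4
    have hA : 0 < A := hAdef ▸ Real.exp_pos _
    have ht : 0 < t := htdef ▸ Real.exp_pos _
    have hδ : 0 < v - u := sub_pos.mpr huv
    have hx : 0 < h * (v - u) / 2 := by positivity
    have hBA : B = A * t ^ 2 := by
      rw [← hAdef, ← hBdef, ← htdef, ← Real.exp_nat_mul, ← Real.exp_add]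
      norm_num
      ring_nf
    -- key identity from the four equations
    have key : c₃ * (v - u) * (h * (v - u) * (A + B) - 2 * (B - A))
        = A * B * h ^ 2 * (v - u) ^ 2 - (B - A) ^ 2 := by
      linear_combination ((h * (v - u) * (A + B) - 2 * (B - A)) / 2) * eq4
        - ((h * (v - u) * (A + B) - 2 * (B - A)) / 2) * eq2
        + (h * (B - A)) * eq3 - (h * (B - A)) * eq1
        - (h * (B - A) * (v - u) / 2) * eq2 - (h * (B - A) * (v - u) / 2) * eq4
    -- sinh bounds in terms of t
    have hsinh : Real.sinh (h * (v - u) / 2) = (t - t⁻¹) / 2 := by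
      rw [Real.sinh_eq, ← htdef, Real.exp_neg]
    have hcosh : Real.cosh (h * (v - u) / 2) = (t + t⁻¹) / 2 := by
      rw [Real.cosh_eq, ← htdef, Real.exp_neg]
    have hi : h * (v - u) * t < t ^ 2 - 1 := by
      have h1 : h * (v - u) / 2 < (t - t⁻¹) / 2 := hsinh ▸ Real.self_lt_sinh_iff.mpr hx
      have h2 : t * t⁻¹ = 1 := mul_inv_cancel₀ ht.ne'
      nlinarith [mul_lt_mul_of_pos_right h1 ht]
    have hii : 2 * (t ^ 2 - 1) < h * (v - u) * (t ^ 2 + 1) := by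
      have h1 : (t - t⁻¹) / 2 < (h * (v - u) / 2) * ((t + t⁻¹) / 2) := by
        rw [← hsinh, ← hcosh]; exact sinh_lt_mul_cosh' hx
      have h2 : t * t⁻¹ = 1 := mul_inv_cancel₀ ht.ne'
      nlinarith [mul_lt_mul_of_pos_right h1 ht]
    have hLpos : 0 < c₃ * (v - u) * (h * (v - u) * (A + B) - 2 * (B - A)) := by
      apply mul_pos (mul_pos hc₃ hδ)
      rw [hBA]
      nlinarith [mul_lt_mul_of_pos_left hii hA]
    have hRneg : A * B * h ^ 2 * (v - u) ^ 2 - (B - A) ^ 2 < 0 := by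
      rw [hBA]
      have hpos : 0 < h * (v - u) * t := by positivity
      have h3 : (h * (v - u) * t) ^ 2 < (t ^ 2 - 1) ^ 2 := by
        nlinarith [hi, hpos]
      nlinarith [mul_lt_mul_of_pos_left h3 (mul_pos hA hA)]
    rw [key] at hLpos
    linarith
  have part1 : ∀ s₁ s₂ : ℝ, s₁ < w → s₂ < w → d s₁ = 0 → d s₂ = 0 → s₁ = s₂ := by
    intro s₁ s₂ h1 h2 hz1 hz2
    rcases lt_trichotomy s₁ s₂ with hlt | heq | hgt
    · exact absurd (main s₁ s₂ hlt h2 hz1 hz2) not_false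
    · exact heq
    · exact absurd (main s₂ s₁ hgt h1 hz2 hz1) not_false
  have part2 : ∀ s₁ s₂ : ℝ, w ≤ s₁ → w ≤ s₂ → d s₁ = 0 → d s₂ = 0 → s₁ = s₂ := by
    intro s₁ s₂ h1 h2 hz1 hz2
    have e1 := hd s₁; rw [min_eq_right h1] at e1
    have e2 := hd s₂; rw [min_eq_right h2] at e2
    have hm : w ≤ (s₁ + s₂) / 2 := by linarith
    have e3 := hd ((s₁ + s₂) / 2); rw [min_eq_right hm] at e3
    have hnm := hnn ((s₁ + s₂) / 2)
    rw [e3] at hnm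
    rw [e1] at hz1; rw [e2] at hz2
    have hsq : (s₁ - s₂) ^ 2 ≤ 0 := by nlinarith
    have : s₁ - s₂ = 0 := by
      have := le_antisymm hsq (sq_nonneg _)
      exact pow_eq_zero_iff (n := 2) (by norm_num) |>.mp this
    linarith
  refine ⟨part1, part2, ?_⟩
  have hsub : {s : ℝ | d s = 0} ⊆ ({s : ℝ | d s = 0} ∩ Set.Iio w) ∪ ({s : ℝ | d s = 0} ∩ Set.Ici w) := by
    intro s hs
    rcases lt_or_ge s w with hlt | hle
    · exact Or.inl ⟨hs, hlt⟩
    · exact Or.inr ⟨hs, hle⟩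
  calc ({s : ℝ | d s = 0}).encard
      ≤ (({s : ℝ | d s = 0} ∩ Set.Iio w) ∪ ({s : ℝ | d s = 0} ∩ Set.Ici w)).encard :=
        Set.encard_mono hsub
    _ ≤ ({s : ℝ | d s = 0} ∩ Set.Iio w).encard + ({s : ℝ | d s = 0} ∩ Set.Ici w).encard :=
        Set.encard_union_le _ _
    _ ≤ 1 + 1 := by
        refine add_le_add ?_ ?_
        · exact Set.encard_le_one_iff.mpr fun a b ha hb => part1 a b ha.2 hb.2 ha.1 hb.1
        · exact Set.encard_le_one_iff.mpr fun a b ha hb => part2 a b ha.2 hb.2 ha.1 hb.1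
    _ = 2 := one_add_one_eq_two
end

section
/- Fix h > 0 and w ∈ {−1, 0}, and real σ > 0. Define r₂(ε) := 1 − 2ε e^{(ε+w)h}(1+εh)/(ε³h² + (h²σ² + 2)ε + 2hσ² + 4ε²h) for ε > |w|. Then r₂ is strictly decreasing on (|w|, ∞), with r₂(ε) → −∞ as ε → ∞ and lim_{ε→|w|⁺} r₂(ε) > 0. -/
theorem stmt_19 (h σ w : ℝ) (hh : 0 < h) (hσ : 0 < σ)
    (hw : w = -1 ∨ w = 0) (r₂ : ℝ → ℝ)
    (hr₂ : ∀ ε : ℝ, r₂ ε = 1 -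
      2 * ε * Real.exp ((ε + w) * h) * (1 + ε * h) /
        (ε ^ 3 * h ^ 2 + (h ^ 2 * σ ^ 2 + 2) * ε + 2 * h * σ ^ 2 +
          4 * ε ^ 2 * h)) :
    StrictAntiOn r₂ (Set.Ioi |w|) ∧
    Filter.Tendsto r₂ Filter.atTop Filter.atBot ∧
    ∃ l : ℝ, 0 < l ∧
      Filter.Tendsto r₂ (nhdsWithin |w| (Set.Ioi |w|)) (nhds l) := by
  have hr₂eq : r₂ = fun ε : ℝ => 1 -
      2 * ε * Real.exp ((ε + w) * h) * (1 + ε * h) /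
        (ε ^ 3 * h ^ 2 + (h ^ 2 * σ ^ 2 + 2) * ε + 2 * h * σ ^ 2 +
          4 * ε ^ 2 * h) := funext hr₂
  subst hr₂eq
  set F : ℝ → ℝ := fun ε => 2 * ε * Real.exp ((ε + w) * h) * (1 + ε * h) with hF
  set G : ℝ → ℝ := fun ε => ε ^ 3 * h ^ 2 + (h ^ 2 * σ ^ 2 + 2) * ε + 2 * h * σ ^ 2 +
      4 * ε ^ 2 * h with hGdef
  have ha : (0:ℝ) ≤ |w| := abs_nonneg w
  -- positivity of G
  have hGpos : ∀ ε : ℝ, 0 ≤ ε → 0 < G ε := by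
    intro ε hε
    have h1 : (0:ℝ) ≤ ε ^ 3 * h ^ 2 := mul_nonneg (pow_nonneg hε 3) (sq_nonneg h)
    have h2 : (0:ℝ) ≤ (h ^ 2 * σ ^ 2 + 2) * ε := by
      apply mul_nonneg _ hε
      nlinarith [sq_nonneg h, sq_nonneg σ, sq_nonneg (h*σ)]
    have h3 : (0:ℝ) < 2 * h * σ ^ 2 := by positivity
    have h4 : (0:ℝ) ≤ 4 * ε ^ 2 * h := by positivity
    simp only [hGdef]
    linarith
  -- derivative facts
  have hFd : ∀ ε : ℝ, HasDerivAt F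
      (2 * Real.exp ((ε + w) * h) * (1 + 3 * ε * h + ε ^ 2 * h ^ 2)) ε := by
    intro ε
    have h1 : HasDerivAt (fun x : ℝ => (x + w) * h) (1 * h) ε :=
      ((hasDerivAt_id ε).add_const w).mul_const h
    have hexp : HasDerivAt (fun x : ℝ => Real.exp ((x + w) * h))
        (Real.exp ((ε + w) * h) * (1 * h)) ε := h1.exp
    have h2 : HasDerivAt (fun x : ℝ => 2 * x) 2 ε := by
      simpa using (hasDerivAt_id ε).const_mul (2:ℝ)
    have h3 : HasDerivAt (fun x : ℝ => 1 + x * h) ((1:ℝ) * h) ε := by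
      simpa using ((hasDerivAt_id ε).mul_const h).const_add (1:ℝ)
    have := (h2.mul hexp).mul h3
    refine this.congr_deriv ?_
    simp only [Pi.mul_apply]
    ring
  have hGd : ∀ ε : ℝ, HasDerivAt G
      (3 * ε ^ 2 * h ^ 2 + (h ^ 2 * σ ^ 2 + 2) + 8 * ε * h) ε := by
    intro ε
    have h1 : HasDerivAt (fun x : ℝ => x ^ 3 * h ^ 2) ((3 * ε ^ 2) * h ^ 2) ε := by
      simpa using (hasDerivAt_pow 3 ε).mul_const (h ^ 2)
    have h2 : HasDerivAt (fun x : ℝ => (h ^ 2 * σ ^ 2 + 2) * x) (h ^ 2 * σ ^ 2 + 2) ε := by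
      simpa using (hasDerivAt_id ε).const_mul (h ^ 2 * σ ^ 2 + 2)
    have h3 : HasDerivAt (fun x : ℝ => 4 * x ^ 2 * h) ((4 * (2 * ε)) * h) ε := by
      have := ((hasDerivAt_pow 2 ε).const_mul (4:ℝ)).mul_const h
      simpa using this
    have := ((h1.add h2).add_const (2 * h * σ ^ 2)).add h3
    refine this.congr_deriv ?_
    ring
  have hr₂d : ∀ ε : ℝ, 0 < ε → HasDerivAt (fun x : ℝ => 1 - F x / G x)
      (-((2 * Real.exp ((ε + w) * h) * (1 + 3 * ε * h + ε ^ 2 * h ^ 2) * G ε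
          - F ε * (3 * ε ^ 2 * h ^ 2 + (h ^ 2 * σ ^ 2 + 2) + 8 * ε * h)) / (G ε) ^ 2)) ε := by
    intro ε hε
    exact ((hFd ε).div (hGd ε) (ne_of_gt (hGpos ε hε.le))).const_sub 1
  -- the derivative is negative for ε > 0
  have hderiv_neg : ∀ ε : ℝ, 0 < ε →
      -((2 * Real.exp ((ε + w) * h) * (1 + 3 * ε * h + ε ^ 2 * h ^ 2) * G ε
          - F ε * (3 * ε ^ 2 * h ^ 2 + (h ^ 2 * σ ^ 2 + 2) + 8 * ε * h)) / (G ε) ^ 2) < 0 := by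
    intro ε hε
    have hP : (0:ℝ) < 2 * h * σ ^ 2 + 6 * ε * h ^ 2 * σ ^ 2 + 4 * ε ^ 2 * h ^ 3 * σ ^ 2
        + ε ^ 3 * (4 * h ^ 2 + h ^ 4 * σ ^ 2) + 4 * ε ^ 4 * h ^ 3 + ε ^ 5 * h ^ 4 := by
      have t1 : (0:ℝ) < 2 * h * σ ^ 2 := by positivity
      have t2 : (0:ℝ) < 6 * ε * h ^ 2 * σ ^ 2 := by positivity
      have t3 : (0:ℝ) < 4 * ε ^ 2 * h ^ 3 * σ ^ 2 := by positivity
      have t4 : (0:ℝ) < ε ^ 3 * (4 * h ^ 2 + h ^ 4 * σ ^ 2) := by positivity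
      have t5 : (0:ℝ) < 4 * ε ^ 4 * h ^ 3 := by positivity
      have t6 : (0:ℝ) < ε ^ 5 * h ^ 4 := by positivity
      linarith
    have hNum : 2 * Real.exp ((ε + w) * h) * (1 + 3 * ε * h + ε ^ 2 * h ^ 2) * G ε
        - F ε * (3 * ε ^ 2 * h ^ 2 + (h ^ 2 * σ ^ 2 + 2) + 8 * ε * h)
        = 2 * Real.exp ((ε + w) * h) *
          (2 * h * σ ^ 2 + 6 * ε * h ^ 2 * σ ^ 2 + 4 * ε ^ 2 * h ^ 3 * σ ^ 2
            + ε ^ 3 * (4 * h ^ 2 + h ^ 4 * σ ^ 2) + 4 * ε ^ 4 * h ^ 3 + ε ^ 5 * h ^ 4) := by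
      simp only [hF, hGdef]
      ring
    have hNpos : 0 < 2 * Real.exp ((ε + w) * h) * (1 + 3 * ε * h + ε ^ 2 * h ^ 2) * G ε
        - F ε * (3 * ε ^ 2 * h ^ 2 + (h ^ 2 * σ ^ 2 + 2) + 8 * ε * h) := by
      rw [hNum]
      exact mul_pos (by positivity) hP
    have : 0 < (2 * Real.exp ((ε + w) * h) * (1 + 3 * ε * h + ε ^ 2 * h ^ 2) * G ε
          - F ε * (3 * ε ^ 2 * h ^ 2 + (h ^ 2 * σ ^ 2 + 2) + 8 * ε * h)) / (G ε) ^ 2 :=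
      div_pos hNpos (pow_pos (hGpos ε hε.le) 2)
    linarith
  refine ⟨?_, ?_, ?_⟩
  · -- StrictAntiOn
    apply strictAntiOn_of_deriv_neg (convex_Ioi _)
    · intro x hx
      have hx0 : 0 < x := lt_of_le_of_lt ha hx
      exact ((hr₂d x hx0).continuousAt).continuousWithinAt
    · intro x hx
      rw [interior_Ioi] at hx
      have hx0 : 0 < x := lt_of_le_of_lt ha hx
      rw [(hr₂d x hx0).deriv]
      exact hderiv_neg x hx0
  · -- Tendsto atBot
    have hK : (0:ℝ) < h ^ 2 + (h ^ 2 * σ ^ 2 + 2) + 2 * h * σ ^ 2 + 4 * h := by positivity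
    set K : ℝ := h ^ 2 + (h ^ 2 * σ ^ 2 + 2) + 2 * h * σ ^ 2 + 4 * h with hKdef
    have hlow : Filter.Tendsto (fun ε : ℝ =>
        (2 * Real.exp (w * h) * h ^ 2 / K) * (Real.exp (ε * h) / (ε * h) ^ 2))
        Filter.atTop Filter.atTop := by
      apply Filter.Tendsto.const_mul_atTop (by positivity)
      exact (Real.tendsto_exp_div_pow_atTop 2).comp
        (Filter.Tendsto.atTop_mul_const hh Filter.tendsto_id)
    have hFG : Filter.Tendsto (fun ε : ℝ => F ε / G ε) Filter.atTop Filter.atTop := by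
      apply Filter.tendsto_atTop_mono' Filter.atTop _ hlow
      filter_upwards [Filter.eventually_ge_atTop (1:ℝ)] with ε hε1
      have hε0 : (0:ℝ) < ε := lt_of_lt_of_le one_pos hε1
      have hGle : G ε ≤ K * ε ^ 3 := by
        have h1 : ε ≤ ε ^ 3 := le_self_pow₀ hε1 (by norm_num)
        have h2 : ε ^ 2 ≤ ε ^ 3 := pow_le_pow_right₀ hε1 (by norm_num)
        have h3 : (1:ℝ) ≤ ε ^ 3 := by linarith
        have e1 : (0:ℝ) ≤ (h ^ 2 * σ ^ 2 + 2) * (ε ^ 3 - ε) :=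
          mul_nonneg (by positivity) (by linarith)
        have e2 : (0:ℝ) ≤ 2 * h * σ ^ 2 * (ε ^ 3 - 1) :=
          mul_nonneg (by positivity) (by linarith)
        have e3 : (0:ℝ) ≤ 4 * h * (ε ^ 3 - ε ^ 2) :=
          mul_nonneg (by positivity) (by linarith)
        simp only [hGdef, hKdef]
        nlinarith [e1, e2, e3]
      have hFge : 2 * Real.exp (w * h) * Real.exp (ε * h) * ε ≤ F ε := by
        simp only [hF]
        have he : Real.exp ((ε + w) * h) = Real.exp (ε * h) * Real.exp (w * h) := by
          rw [← Real.exp_add]; ring_nf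
        rw [he]
        have key : (0:ℝ) ≤ 2 * ε * (Real.exp (ε * h) * Real.exp (w * h)) * (ε * h) := by
          positivity
        nlinarith [key]
      have heq : (2 * Real.exp (w * h) * h ^ 2 / K) * (Real.exp (ε * h) / (ε * h) ^ 2)
          = (2 * Real.exp (w * h) * Real.exp (ε * h) * ε) / (K * ε ^ 3) := by
        field_simp
      rw [heq]
      exact div_le_div₀ (le_trans (by positivity) hFge) hFge (hGpos ε hε0.le)
        hGle
    have := (Filter.tendsto_neg_atTop_atBot.comp hFG)
    have h2 := Filter.tendsto_atBot_add_const_left Filter.atTop 1 this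
    apply h2.congr
    intro x
    simp [Function.comp]
    ring
  · -- limit at |w| from the right
    refine ⟨1 - F |w| / G |w|, ?_, ?_⟩
    · rcases hw with hw | hw
      · subst hw
        have habs : |(-1:ℝ)| = 1 := by norm_num
        rw [habs]
        have hG1 : G 1 = h ^ 2 + (h ^ 2 * σ ^ 2 + 2) + 2 * h * σ ^ 2 + 4 * h := by
          simp [hGdef]
        have hF1 : F 1 = 2 * (1 + h) := by
          simp [hF]
        rw [hG1, hF1, sub_pos, div_lt_one (by positivity)]
        nlinarith [mul_pos hh hh, mul_pos hh (mul_pos hσ hσ), sq_nonneg (h*σ)]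
      · subst hw
        have habs : |(0:ℝ)| = 0 := abs_zero
        rw [habs]
        have hF0 : F 0 = 0 := by simp [hF]
        rw [hF0]
        simp
    · have hcont : ContinuousAt (fun x : ℝ => 1 - F x / G x) |w| := by
        have hGne : G |w| ≠ 0 := ne_of_gt (hGpos _ ha)
        have hcF : Continuous F := by
          simp only [hF]
          exact ((continuous_const.mul continuous_id).mul
            (Real.continuous_exp.comp ((continuous_id.add continuous_const).mul
              continuous_const))).mul
            (continuous_const.add (continuous_id.mul continuous_const))
        have hcG : Continuous G := by
          simp only [hGdef]
          exact ((((continuous_pow 3).mul continuous_const).add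
            (continuous_const.mul continuous_id)).add continuous_const).add
            ((continuous_const.mul (continuous_pow 2)).mul continuous_const)
        exact continuousAt_const.sub (hcF.continuousAt.div hcG.continuousAt hGne)
      exact hcont.tendsto.mono_left nhdsWithin_le_nhds
end
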